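/- arXiv:1706.07650 — 4 statements merged into one kernel-verified Lean document; each statement's English description precedes it below -/
import Mathlib

section
/- The function Φ : ℝ^n → ℝ defined by Φ(w) = Σ_{j=1}^n ( −ν_j w_j − ∫_{Vor_w(j)} (‖x − y_j‖ − w_j) dμ(x) ) attains a global minimum: there exists w* ∈ ℝ^n with Φ(w*) = inf_{w∈ℝ^n} Φ(w). -/
open MeasureTheory ENNReal

noncomputable section

private lemma psi_strictMono {A : ℝ} (hA : 0 < A) :
    StrictMono (fun u : ℝ => u / Real.sqrt (u ^ 2 + A)) := by
  intro u v huv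
  have hu : (0:ℝ) < Real.sqrt (u ^ 2 + A) := Real.sqrt_pos.2 (by positivity)
  have hv : (0:ℝ) < Real.sqrt (v ^ 2 + A) := Real.sqrt_pos.2 (by positivity)
  have hsu : Real.sqrt (u ^ 2 + A) ^ 2 = u ^ 2 + A := Real.sq_sqrt (by positivity)
  have hsv : Real.sqrt (v ^ 2 + A) ^ 2 = v ^ 2 + A := Real.sq_sqrt (by positivity)
  simp only [div_lt_div_iff₀ hu hv]
  rcases le_or_gt 0 u with h0u | h0u
  · have h0v : 0 < v := lt_of_le_of_lt h0u huv
    have hsq : (u * Real.sqrt (v ^ 2 + A)) ^ 2 < (v * Real.sqrt (u ^ 2 + A)) ^ 2 := by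
      have : u ^ 2 < v ^ 2 := by nlinarith
      rw [mul_pow, mul_pow, hsu, hsv]; nlinarith
    exact lt_of_pow_lt_pow_left₀ 2 (by positivity) hsq
  · rcases le_or_gt v 0 with h0v | h0v
    · have hsq : (-v * Real.sqrt (u ^ 2 + A)) ^ 2 < (-u * Real.sqrt (v ^ 2 + A)) ^ 2 := by
        have : v ^ 2 < u ^ 2 := by nlinarith
        rw [mul_pow, mul_pow, hsu, hsv]; nlinarith
      have := lt_of_pow_lt_pow_left₀ 2 (mul_nonneg (by linarith) hv.le) hsq
      nlinarith
    · have h1 : u * Real.sqrt (v ^ 2 + A) < 0 := mul_neg_of_neg_of_pos h0u hv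
      have h2 : 0 < v * Real.sqrt (u ^ 2 + A) := mul_pos h0v hu
      linarith

private lemma F_strictMono {A s : ℝ} (hA : 0 < A) (hs : 0 < s) :
    StrictMono (fun t : ℝ => Real.sqrt (t ^ 2 + A) - Real.sqrt ((t - s) ^ 2 + A)) := by
  have key : ∀ c t : ℝ, HasDerivAt (fun t : ℝ => Real.sqrt ((t - c) ^ 2 + A))
      ((t - c) / Real.sqrt ((t - c) ^ 2 + A)) t := by
    intro c t
    have hpos : (0:ℝ) < (t - c) ^ 2 + A := by positivity
    have h1 : HasDerivAt (fun t : ℝ => (t - c) ^ 2 + A) (2 * (t - c)) t := by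
      have := (((hasDerivAt_id t).sub_const c).pow 2).add_const A
      simpa [mul_comm] using this
    have h2 := (Real.hasDerivAt_sqrt hpos.ne').comp t h1
    refine h2.congr_deriv ?_
    have : Real.sqrt ((t - c) ^ 2 + A) ≠ 0 := (Real.sqrt_pos.2 hpos).ne'
    field_simp
  apply strictMono_of_deriv_pos
  intro t
  have hF : HasDerivAt (fun t : ℝ => Real.sqrt (t ^ 2 + A) - Real.sqrt ((t - s) ^ 2 + A))
      ((t - 0) / Real.sqrt ((t - 0) ^ 2 + A) - (t - s) / Real.sqrt ((t - s) ^ 2 + A)) t := by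
    have := (key 0 t).sub (key s t)
    simp only [sub_zero] at this ⊢; exact this
  rw [hF.deriv]
  have := psi_strictMono hA (show t - s < t - 0 by linarith)
  simpa [sub_pos] using this

private lemma levelset_null {d : ℕ} (hd : 2 ≤ d) (a b : EuclideanSpace ℝ (Fin d)) (hab : a ≠ b) (c : ℝ) :
    volume {x : EuclideanSpace ℝ (Fin d) | ‖x - a‖ - ‖x - b‖ = c} = 0 := by
  obtain ⟨k, rfl⟩ : ∃ k, d = k + 1 := ⟨d - 1, by omega⟩
  have hk : 1 ≤ k := by omega
  set s : ℝ := ‖b - a‖ with hs_def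
  have hs : 0 < s := by
    rw [hs_def, norm_pos_iff]
    exact sub_ne_zero.2 (Ne.symm hab)
  set e : EuclideanSpace ℝ (Fin (k + 1)) := s⁻¹ • (b - a) with he_def
  have he : ‖e‖ = 1 := by
    rw [he_def, norm_smul, Real.norm_eq_abs, abs_of_pos (inv_pos.2 hs), ← hs_def,
      inv_mul_cancel₀ hs.ne']
  have hON : Orthonormal ℝ (Set.restrict {(0 : Fin (k + 1))} (fun _ => e)) := by
    rw [orthonormal_iff_ite]
    rintro ⟨i, hi⟩ ⟨j, hj⟩
    simp only [Set.mem_singleton_iff] at hi hj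
    subst hi; subst hj
    have h1 : (inner ℝ e e : ℝ) = 1 := by
      rw [real_inner_self_eq_norm_sq, he, one_pow]
    rw [if_pos rfl]
    exact h1
  obtain ⟨B, hB⟩ := Orthonormal.exists_orthonormalBasis_extension_of_card_eq
      (ι := Fin (k + 1)) (by simp) hON
  have hB0 : B 0 = e := hB 0 rfl
  have hrepr : B.repr (b - a) = s • EuclideanSpace.single (0 : Fin (k + 1)) (1 : ℝ) := by
    have hba : b - a = s • e := by
      rw [he_def, smul_smul, mul_inv_cancel₀ hs.ne', one_smul]
    rw [hba, LinearIsometryEquiv.map_smul, ← hB0, B.repr_self]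
  -- the three auxiliary sets
  set S₁ : Set (EuclideanSpace ℝ (Fin (k + 1))) := {x | ‖x‖ - ‖x - (b - a)‖ = c} with hS₁_def
  set S₃ : Set (EuclideanSpace ℝ (Fin (k + 1))) :=
    {u | ‖u‖ - ‖u - s • EuclideanSpace.single (0 : Fin (k + 1)) (1 : ℝ)‖ = c} with hS₃_def
  have hS₃meas : MeasurableSet S₃ := by
    have : Continuous fun u : EuclideanSpace ℝ (Fin (k + 1)) =>
        ‖u‖ - ‖u - s • EuclideanSpace.single (0 : Fin (k + 1)) (1 : ℝ)‖ := by fun_prop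
    exact this.measurable (measurableSet_singleton c)
  -- step 1 : translation
  have h1 : {x : EuclideanSpace ℝ (Fin (k + 1)) | ‖x - a‖ - ‖x - b‖ = c}
      = (fun x => x - a) ⁻¹' S₁ := by
    ext x
    simp only [hS₁_def, Set.mem_preimage, Set.mem_setOf_eq]
    rw [show x - a - (b - a) = x - b by abel]
  have hS₁meas : MeasurableSet S₁ := by
    have : Continuous fun x : EuclideanSpace ℝ (Fin (k + 1)) => ‖x‖ - ‖x - (b - a)‖ := by fun_prop
    exact this.measurable (measurableSet_singleton c)
  have h1' : volume ((fun x : EuclideanSpace ℝ (Fin (k + 1)) => x - a) ⁻¹' S₁) = volume S₁ := by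
    simp only [sub_eq_add_neg]
    exact measure_preimage_add_right volume (-a) S₁
  -- step 2 : rotation
  have h2 : S₁ = B.repr ⁻¹' S₃ := by
    ext x
    simp only [hS₁_def, hS₃_def, Set.mem_preimage, Set.mem_setOf_eq]
    rw [← hrepr, ← map_sub, B.repr.norm_map, B.repr.norm_map]
  have h2' : volume (B.repr ⁻¹' S₃) = volume S₃ :=
    B.measurePreserving_repr.measure_preimage hS₃meas.nullMeasurableSet
  -- step 3 : to the pi measure space
  set φ := (MeasurableEquiv.toLp 2 (Fin (k + 1) → ℝ)).symm with hφ_def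
  set g : (Fin (k + 1) → ℝ) → ℝ := fun v =>
    Real.sqrt (∑ i, (v i) ^ 2) -
      Real.sqrt (∑ i, (v i - (if i = (0 : Fin (k + 1)) then s else 0)) ^ 2) with hg_def
  have hgc : Continuous g := by
    apply Continuous.sub
    · exact Real.continuous_sqrt.comp (continuous_finset_sum _ fun i _ =>
        (continuous_apply i).pow 2)
    · exact Real.continuous_sqrt.comp (continuous_finset_sum _ fun i _ =>
        ((continuous_apply i).sub continuous_const).pow 2)
  set T : Set (Fin (k + 1) → ℝ) := g ⁻¹' {c} with hT_def
  have hTmeas : MeasurableSet T := hgc.measurable (measurableSet_singleton c)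
  have h3 : φ.symm ⁻¹' S₃ = T := by
    ext v
    simp only [Set.mem_preimage, hS₃_def, Set.mem_setOf_eq, hT_def, hg_def,
      Set.mem_singleton_iff]
    have hnorm1 : ‖φ.symm v‖ = Real.sqrt (∑ i, (v i) ^ 2) := by
      rw [EuclideanSpace.norm_eq]
      congr 1
      refine Finset.sum_congr rfl fun i _ => ?_
      rw [hφ_def, MeasurableEquiv.symm_symm, MeasurableEquiv.coe_toLp, PiLp.toLp_apply,
        Real.norm_eq_abs, sq_abs]
    have hnorm2 : ‖φ.symm v - s • EuclideanSpace.single (0 : Fin (k + 1)) (1 : ℝ)‖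
        = Real.sqrt (∑ i, (v i - (if i = (0 : Fin (k + 1)) then s else 0)) ^ 2) := by
      rw [EuclideanSpace.norm_eq]
      congr 1
      refine Finset.sum_congr rfl fun i _ => ?_
      rw [Real.norm_eq_abs, sq_abs]
      congr 1
      rw [PiLp.sub_apply, PiLp.smul_apply, EuclideanSpace.single_apply,
        hφ_def, MeasurableEquiv.symm_symm, MeasurableEquiv.coe_toLp, PiLp.toLp_apply]
      split_ifs <;> simp
    rw [hnorm1, hnorm2]
  have h3' : volume (φ.symm ⁻¹' S₃) = volume S₃ :=
    (MeasurePreserving.symm φ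
      (EuclideanSpace.volume_preserving_symm_measurableEquiv_toLp (Fin (k + 1)))).measure_preimage
      hS₃meas.nullMeasurableSet
  -- step 4 : split off the first coordinate
  set ψ := MeasurableEquiv.piFinSuccAbove (fun _ : Fin (k + 1) => ℝ) 0 with hψ_def
  set P : Set (ℝ × (Fin k → ℝ)) := ψ.symm ⁻¹' T with hP_def
  have hPmeas : MeasurableSet P := ψ.symm.measurable hTmeas
  have h4' : volume P = volume T :=
    (MeasurePreserving.symm ψ
      (volume_preserving_piFinSuccAbove (fun _ : Fin (k + 1) => ℝ) 0)).measure_preimage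
      hTmeas.nullMeasurableSet
  have hψsymm : ∀ p : ℝ × (Fin k → ℝ), ψ.symm p = Fin.cons p.1 p.2 := by
    intro p
    rw [hψ_def]
    simp [MeasurableEquiv.piFinSuccAbove, Fin.insertNthEquiv_zero]
    rfl
  have hP : P = {p : ℝ × (Fin k → ℝ) |
      Real.sqrt (p.1 ^ 2 + ∑ j, (p.2 j) ^ 2) -
        Real.sqrt ((p.1 - s) ^ 2 + ∑ j, (p.2 j) ^ 2) = c} := by
    ext ⟨t, z⟩
    simp only [hP_def, Set.mem_preimage, hT_def, hg_def, Set.mem_singleton_iff,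
      Set.mem_setOf_eq, hψsymm]
    rw [Fin.sum_univ_succ, Fin.sum_univ_succ]
    simp [Fin.succ_ne_zero]
  -- step 5 : Fubini
  have h5 : volume P = 0 := by
    rw [hP]
    set P' : Set (ℝ × (Fin k → ℝ)) := {p | Real.sqrt (p.1 ^ 2 + ∑ j, (p.2 j) ^ 2) -
        Real.sqrt ((p.1 - s) ^ 2 + ∑ j, (p.2 j) ^ 2) = c} with hP'_def
    have hP'meas : MeasurableSet P' := by
      have hc : Continuous fun p : ℝ × (Fin k → ℝ) =>
          Real.sqrt (p.1 ^ 2 + ∑ j, (p.2 j) ^ 2) -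
            Real.sqrt ((p.1 - s) ^ 2 + ∑ j, (p.2 j) ^ 2) := by
        apply Continuous.sub
        · exact Real.continuous_sqrt.comp ((continuous_fst.pow 2).add
            (continuous_finset_sum _ fun j _ => ((continuous_apply j).comp continuous_snd).pow 2))
        · exact Real.continuous_sqrt.comp (((continuous_fst.sub continuous_const).pow 2).add
            (continuous_finset_sum _ fun j _ => ((continuous_apply j).comp continuous_snd).pow 2))
      exact hc.measurable (measurableSet_singleton c)
    set Q : Set ((Fin k → ℝ) × ℝ) := Prod.swap ⁻¹' P' with hQ_def
    have hQmeas : MeasurableSet Q := measurable_swap hP'meas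
    have hswap : volume P' = ((volume : Measure (Fin k → ℝ)).prod (volume : Measure ℝ)) Q := by
      rw [Measure.volume_eq_prod, ← Measure.prod_swap, hQ_def,
        Measure.map_apply measurable_swap hP'meas]
    rw [hswap]
    rw [Measure.measure_prod_null hQmeas]
    set i0 : Fin k := ⟨0, hk⟩ with hi0_def
    have hae : ∀ᵐ z : Fin k → ℝ ∂volume, z i0 ≠ 0 := by
      rw [volume_pi]
      exact Measure.ae_eval_ne _ i0 0
    filter_upwards [hae] with z hz
    have hA : 0 < ∑ j, (z j) ^ 2 := by
      have h1 : (0 : ℝ) < (z i0) ^ 2 :=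
        (sq_nonneg _).lt_of_ne (Ne.symm (pow_ne_zero 2 hz))
      exact lt_of_lt_of_le h1 (Finset.single_le_sum (fun j _ => sq_nonneg (z j))
        (Finset.mem_univ _))
    have hsub : Set.Subsingleton {t : ℝ | Real.sqrt (t ^ 2 + ∑ j, (z j) ^ 2) -
        Real.sqrt ((t - s) ^ 2 + ∑ j, (z j) ^ 2) = c} := by
      intro t1 h1 t2 h2
      exact (F_strictMono hA hs).injective (h1.trans h2.symm)
    have : Prod.mk z ⁻¹' Q = {t : ℝ | Real.sqrt (t ^ 2 + ∑ j, (z j) ^ 2) -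
        Real.sqrt ((t - s) ^ 2 + ∑ j, (z j) ^ 2) = c} := by
      ext t
      simp [hQ_def, hP'_def]
    rw [this]
    exact hsub.countable.measure_zero _
  rw [h1, h1', h2, h2', ← h3', h3, ← h4', h5]

/-- The additively weighted Voronoi cell of the site `y j` with weights `w`. -/
def Vor {d n : ℕ} (y : Fin n → EuclideanSpace ℝ (Fin d)) (w : Fin n → ℝ) (j : Fin n) :
    Set (EuclideanSpace ℝ (Fin d)) :=
  {x | ∀ k, k ≠ j → ‖x - y j‖ - w j ≤ ‖x - y k‖ - w k}

/-- The function
`Φ(w) = ∑ⱼ ( -νⱼ wⱼ - ∫_{Vor_w(j)} (‖x - yⱼ‖ - wⱼ) dμ(x) )` attains a global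
minimum on `ℝⁿ`. -/
theorem Phi_attains_minimum
    {d n : ℕ} (hd : 2 ≤ d)
    (μ : Measure (EuclideanSpace ℝ (Fin d))) [IsProbabilityMeasure μ]
    (hac : μ ≪ volume)
    (hμint : Integrable (fun x => ‖x‖) μ)
    (y : Fin n → EuclideanSpace ℝ (Fin d)) (hy : Function.Injective y)
    (a : Fin n → ℝ) (ha : ∀ j, a j ∈ Set.Ioc (0 : ℝ) 1) (hsum : ∑ j, a j = 1) :
    ∃ wstar : Fin n → ℝ, ∀ w : Fin n → ℝ,
      ∑ j, (-(a j * wstar j) - ∫ x in Vor y wstar j, (‖x - y j‖ - wstar j) ∂μ) ≤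
        ∑ j, (-(a j * w j) - ∫ x in Vor y w j, (‖x - y j‖ - w j) ∂μ) := by
  classical
  have hn : 0 < n := by
    rcases Nat.eq_zero_or_pos n with h | h
    · subst h; simp at hsum
    · exact h
  haveI : Nonempty (Fin n) := ⟨⟨0, hn⟩⟩
  have hne : (Finset.univ : Finset (Fin n)).Nonempty := Finset.univ_nonempty
  set Φ : (Fin n → ℝ) → ℝ := fun w =>
    ∑ j, (-(a j * w j) - ∫ x in Vor y w j, (‖x - y j‖ - w j) ∂μ) with hΦ_def
  set F : (Fin n → ℝ) → EuclideanSpace ℝ (Fin d) → ℝ := fun w x =>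
    Finset.univ.inf' hne (fun k => ‖x - y k‖ - w k) with hF_def
  -- integrability of the individual integrands
  have hint : ∀ (j : Fin n) (wj : ℝ), Integrable (fun x => ‖x - y j‖ - wj) μ := by
    intro j wj
    apply Integrable.mono' (g := fun x => ‖x‖ + (‖y j‖ + |wj|))
      (hμint.add (integrable_const _))
      ((by fun_prop : Continuous fun x : EuclideanSpace ℝ (Fin d) => ‖x - y j‖ - wj).aestronglyMeasurable)
    filter_upwards with x
    have h1 : ‖x - y j‖ ≤ ‖x‖ + ‖y j‖ := norm_sub_le x (y j)
    rw [Real.norm_eq_abs, abs_le]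
    constructor <;>
      [skip; skip] <;>
      linarith [le_abs_self wj, neg_abs_le wj, norm_nonneg (x - y j), norm_nonneg x,
        norm_nonneg (y j)]
  have hVorMeas : ∀ (w : Fin n → ℝ) j, MeasurableSet (Vor y w j) := by
    intro w j
    have hV : Vor y w j = ⋂ k, ⋂ (_ : k ≠ j), {x | ‖x - y j‖ - w j ≤ ‖x - y k‖ - w k} := by
      ext x; simp [Vor]
    rw [hV]
    refine MeasurableSet.iInter fun k => MeasurableSet.iInter fun _ => ?_
    exact measurableSet_le (by fun_prop) (by fun_prop)
  have hVor_eq : ∀ (w : Fin n → ℝ) j x, x ∈ Vor y w j → ‖x - y j‖ - w j = F w x := by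
    intro w j x hx
    simp only [hF_def]
    refine le_antisymm (Finset.le_inf' hne _ fun k _ => ?_)
      (Finset.inf'_le _ (Finset.mem_univ j))
    by_cases hkj : k = j
    · subst hkj; exact le_refl _
    · exact hx k hkj
  have hVor_cover : ∀ (w : Fin n → ℝ) x, ∃ j, x ∈ Vor y w j := by
    intro w x
    obtain ⟨j, -, hj⟩ := Finset.exists_mem_eq_inf' hne (fun k => ‖x - y k‖ - w k)
    refine ⟨j, fun k _ => ?_⟩
    rw [← hj]
    exact Finset.inf'_le _ (Finset.mem_univ k)
  have hFcont : ∀ w : Fin n → ℝ, Continuous (F w) := by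
    intro w
    simp only [hF_def]
    exact Continuous.finset_inf'_apply (f := fun (k : Fin n) (x : EuclideanSpace ℝ (Fin d)) =>
      ‖x - y k‖ - w k) hne fun k _ => by fun_prop
  have hFint : ∀ w : Fin n → ℝ, Integrable (F w) μ := by
    intro w
    set C0 : ℝ := Finset.univ.sup' hne (fun k => ‖y k‖ + |w k|) with hC0_def
    apply Integrable.mono' (g := fun x => ‖x‖ + C0) (hμint.add (integrable_const _))
      (hFcont w).aestronglyMeasurable
    filter_upwards with x
    rw [Real.norm_eq_abs, abs_le]
    constructor
    · refine le_trans (show -(‖x‖ + C0) ≤ -C0 by linarith [norm_nonneg x])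
        (Finset.le_inf' hne _ fun k _ => ?_)
      have h2 : ‖y k‖ + |w k| ≤ C0 := by
        rw [hC0_def]; exact Finset.le_sup' (fun k => ‖y k‖ + |w k|) (Finset.mem_univ k)
      have h3 := le_abs_self (w k)
      have h4 := norm_nonneg (x - y k)
      linarith [norm_nonneg (y k)]
    · obtain ⟨k0⟩ := ‹Nonempty (Fin n)›
      have h1 : F w x ≤ ‖x - y k0‖ - w k0 := by
        simp only [hF_def]; exact Finset.inf'_le _ (Finset.mem_univ k0)
      have h2 : ‖y k0‖ + |w k0| ≤ C0 := by
        rw [hC0_def]; exact Finset.le_sup' (fun k => ‖y k‖ + |w k|) (Finset.mem_univ k0)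
      have h3 := neg_abs_le (w k0)
      have h4 := norm_sub_le x (y k0)
      simp only [hF_def] at h1 ⊢
      linarith
  -- sum over Voronoi cells = global integral of the min
  have hsum_eq : ∀ w : Fin n → ℝ,
      ∑ j, ∫ x in Vor y w j, (‖x - y j‖ - w j) ∂μ = ∫ x, F w x ∂μ := by
    intro w
    have hcover : ⋃ j, Vor y w j = Set.univ :=
      Set.eq_univ_of_forall fun x => Set.mem_iUnion.2 (hVor_cover w x)
    have hdisj : Pairwise (Function.onFun (MeasureTheory.AEDisjoint μ) fun j => Vor y w j) := by
      intro j k hjk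
      have hsubset : Vor y w j ∩ Vor y w k ⊆
          {x | ‖x - y j‖ - ‖x - y k‖ = w j - w k} := by
        rintro x ⟨hxj, hxk⟩
        have h1 := hxj k (Ne.symm hjk)
        have h2 := hxk j hjk
        simp only [Set.mem_setOf_eq]
        linarith
      exact measure_mono_null hsubset
        (hac (levelset_null hd (y j) (y k) (fun h => hjk (hy h)) (w j - w k)))
    calc ∑ j, ∫ x in Vor y w j, (‖x - y j‖ - w j) ∂μ
        = ∑ j, ∫ x in Vor y w j, F w x ∂μ := by
          refine Finset.sum_congr rfl fun j _ => ?_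
          exact setIntegral_congr_fun (hVorMeas w j) (fun x hx => hVor_eq w j x hx)
      _ = ∑' j, ∫ x in Vor y w j, F w x ∂μ := (tsum_fintype _).symm
      _ = ∫ x in ⋃ j, Vor y w j, F w x ∂μ :=
          (integral_iUnion_ae (fun j => (hVorMeas w j).nullMeasurableSet) hdisj
            (by rw [hcover]; exact (hFint w).integrableOn)).symm
      _ = ∫ x, F w x ∂μ := by rw [hcover, setIntegral_univ]
  have hΦ_formula : ∀ w : Fin n → ℝ, Φ w = -(∑ j, a j * w j) - ∫ x, F w x ∂μ := by
    intro w
    simp only [hΦ_def]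
    rw [Finset.sum_sub_distrib, ← hsum_eq w, Finset.sum_neg_distrib]
  set I : Fin n → ℝ := fun j => ∫ x, ‖x - y j‖ ∂μ with hI_def
  have hIint : ∀ j, Integrable (fun x => ‖x - y j‖) μ := by
    intro j
    simpa using hint j 0
  have hGle : ∀ (w : Fin n → ℝ) j0, ∫ x, F w x ∂μ ≤ I j0 - w j0 := by
    intro w j0
    have hi : ∫ x, (‖x - y j0‖ - w j0) ∂μ = I j0 - w j0 := by
      rw [integral_sub (hIint j0) (integrable_const _), integral_const]
      simp [hI_def]
    rw [← hi]
    refine integral_mono (hFint w) (hint j0 (w j0)) fun x => ?_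
    simp only [hF_def]
    exact Finset.inf'_le _ (Finset.mem_univ j0)
  have hcoerce : ∀ (w : Fin n → ℝ) j0, (∑ j, a j * (w j0 - w j)) - I j0 ≤ Φ w := by
    intro w j0
    rw [hΦ_formula w]
    have h1 := hGle w j0
    have hexp : ∑ j, a j * (w j0 - w j) = w j0 - ∑ j, a j * w j := by
      simp only [mul_sub, Finset.sum_sub_distrib, ← Finset.sum_mul, hsum, one_mul]
    linarith
  -- Lipschitz continuity
  have hFdiff : ∀ (w w' : Fin n → ℝ) x, |F w x - F w' x| ≤ dist w w' := by
    intro w w' x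
    have key : ∀ u v : Fin n → ℝ, F u x ≤ F v x + dist u v := by
      intro u v
      obtain ⟨k, -, hk⟩ := Finset.exists_mem_eq_inf' hne (fun k => ‖x - y k‖ - v k)
      have h1 : F u x ≤ ‖x - y k‖ - u k := by
        simp only [hF_def]; exact Finset.inf'_le _ (Finset.mem_univ k)
      have h2 : |u k - v k| ≤ dist u v := by
        rw [← Real.dist_eq]; exact dist_le_pi_dist u v k
      have h3 : F v x = ‖x - y k‖ - v k := by simp only [hF_def]; exact hk
      have h4 := abs_le.1 h2
      rw [h3]
      linarith [h4.1, h4.2]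
    have k1 := key w w'
    have k2 := key w' w
    rw [dist_comm] at k2
    rw [abs_le]
    constructor <;> linarith
  have hΦlip : ∀ w w' : Fin n → ℝ, Φ w ≤ Φ w' + 2 * dist w w' := by
    intro w w'
    rw [hΦ_formula w, hΦ_formula w']
    have hsum_d : |∑ j, a j * w j - ∑ j, a j * w' j| ≤ dist w w' := by
      rw [← Finset.sum_sub_distrib]
      refine (Finset.abs_sum_le_sum_abs _ _).trans ?_
      have hb : ∀ j ∈ Finset.univ, |a j * w j - a j * w' j| ≤ a j * dist w w' := by
        intro j _
        rw [← mul_sub, abs_mul, abs_of_pos (ha j).1]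
        refine mul_le_mul_of_nonneg_left ?_ (ha j).1.le
        rw [← Real.dist_eq]; exact dist_le_pi_dist w w' j
      refine (Finset.sum_le_sum hb).trans ?_
      rw [← Finset.sum_mul, hsum, one_mul]
    have hint_d : |∫ x, F w x ∂μ - ∫ x, F w' x ∂μ| ≤ dist w w' := by
      rw [← integral_sub (hFint w) (hFint w')]
      calc |∫ x, (F w x - F w' x) ∂μ| ≤ ∫ x, |F w x - F w' x| ∂μ := by
            simpa [Real.norm_eq_abs] using
              norm_integral_le_integral_norm (μ := μ) (f := fun x => F w x - F w' x)
        _ ≤ ∫ _x, dist w w' ∂μ :=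
            integral_mono ((hFint w).sub (hFint w')).abs (integrable_const _)
              (fun x => hFdiff w w' x)
        _ = dist w w' := by simp
    linarith [abs_le.1 hsum_d, abs_le.1 hint_d]
  have hΦcont : Continuous Φ := by
    refine (LipschitzWith.of_dist_le_mul (K := 2) fun w w' => ?_).continuous
    have k1 := hΦlip w w'
    have k2 := hΦlip w' w
    rw [dist_comm w' w] at k2
    have hcoe : ((2 : NNReal) : ℝ) = 2 := by norm_num
    rw [Real.dist_eq, hcoe, abs_le]
    constructor <;> linarith
  -- shift invariance
  have hFshift : ∀ (w : Fin n → ℝ) (M : ℝ) x, F (fun j => w j - M) x = F w x + M := by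
    intro w M x
    simp only [hF_def]
    apply le_antisymm
    · obtain ⟨k, -, hk⟩ := Finset.exists_mem_eq_inf' hne (fun k => ‖x - y k‖ - w k)
      have h1 : Finset.univ.inf' hne (fun k => ‖x - y k‖ - (w k - M)) ≤
          ‖x - y k‖ - (w k - M) := Finset.inf'_le _ (Finset.mem_univ k)
      have h2 : ‖x - y k‖ - (w k - M) = (‖x - y k‖ - w k) + M := by ring
      rw [h2, ← hk] at h1
      linarith
    · refine Finset.le_inf' hne _ fun k _ => ?_
      have h1 : Finset.univ.inf' hne (fun k => ‖x - y k‖ - w k) ≤ ‖x - y k‖ - w k :=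
        Finset.inf'_le _ (Finset.mem_univ k)
      linarith
  have hshift : ∀ (w : Fin n → ℝ) (M : ℝ), Φ (fun j => w j - M) = Φ w := by
    intro w M
    rw [hΦ_formula, hΦ_formula]
    have h1 : ∑ j, a j * (w j - M) = (∑ j, a j * w j) - M := by
      simp only [mul_sub, Finset.sum_sub_distrib, ← Finset.sum_mul, hsum, one_mul]
    have h2 : ∫ x, F (fun j => w j - M) x ∂μ = (∫ x, F w x ∂μ) + M := by
      have : (fun x => F (fun j => w j - M) x) = fun x => F w x + M := by
        funext x; exact hFshift w M x
      rw [this, integral_add (hFint w) (integrable_const _)]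
      simp
    rw [h1, h2]; ring
  -- constants
  set m : ℝ := Finset.univ.inf' hne a with hm_def
  have hm : 0 < m := by
    obtain ⟨j, -, hj⟩ := Finset.exists_mem_eq_inf' hne a
    rw [hm_def, hj]; exact (ha j).1
  set C : ℝ := Finset.univ.sup' hne I with hC_def
  set R : ℝ := max 0 ((Φ 0 + C + 1) / m) with hR_def
  have hR0 : (0 : ℝ) ≤ R := le_max_left _ _
  have hmR : Φ 0 + C + 1 ≤ m * R := by
    have h1 : (Φ 0 + C + 1) / m ≤ R := le_max_right _ _
    calc Φ 0 + C + 1 = m * ((Φ 0 + C + 1) / m) := by field_simp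
      _ ≤ m * R := mul_le_mul_of_nonneg_left h1 hm.le
  set K : Set (Fin n → ℝ) := Set.Icc (fun _ : Fin n => -R) (0 : Fin n → ℝ) with hK_def
  have hKcomp : IsCompact K := isCompact_Icc
  have hK0 : (0 : Fin n → ℝ) ∈ K := by
    refine Set.mem_Icc.2 ⟨fun j => ?_, le_refl _⟩
    simpa using neg_nonpos.2 hR0
  obtain ⟨wstar, hwK, hwmin⟩ := hKcomp.exists_isMinOn ⟨0, hK0⟩ hΦcont.continuousOn
  have hmain : ∀ w : Fin n → ℝ, Φ wstar ≤ Φ w := by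
    intro w
    set M : ℝ := Finset.univ.sup' hne w with hM_def
    set w' : Fin n → ℝ := fun j => w j - M with hw'_def
    have hΦw' : Φ w' = Φ w := hshift w M
    obtain ⟨j0, -, hj0⟩ := Finset.exists_mem_eq_sup' hne w
    have hw'le : ∀ j, w' j ≤ 0 := by
      intro j
      simp only [hw'_def, hM_def]
      exact sub_nonpos.2 (Finset.le_sup' w (Finset.mem_univ j))
    have hw'j0 : w' j0 = 0 := by
      simp only [hw'_def, hM_def, hj0, sub_self]
    by_cases hcase : ∀ j, -R ≤ w' j
    · have hwK' : w' ∈ K := Set.mem_Icc.2 ⟨fun j => hcase j, fun j => hw'le j⟩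
      have := isMinOn_iff.1 hwmin w' hwK'
      linarith
    · push_neg at hcase
      obtain ⟨j1, hj1⟩ := hcase
      have hb := hcoerce w' j0
      have hsum_ge : a j1 * (w' j0 - w' j1) ≤ ∑ j, a j * (w' j0 - w' j) := by
        refine Finset.single_le_sum (f := fun j => a j * (w' j0 - w' j))
          (fun j _ => mul_nonneg (ha j).1.le ?_) (Finset.mem_univ j1)
        rw [hw'j0]
        linarith [hw'le j]
      have hterm : m * R ≤ a j1 * (w' j0 - w' j1) := by
        rw [hw'j0, zero_sub]
        have h1 : m ≤ a j1 := Finset.inf'_le a (Finset.mem_univ j1)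
        have h2 : R ≤ -w' j1 := by linarith
        calc m * R ≤ a j1 * R := mul_le_mul_of_nonneg_right h1 hR0
          _ ≤ a j1 * -w' j1 := mul_le_mul_of_nonneg_left h2 (ha j1).1.le
      have hIC : I j0 ≤ C := Finset.le_sup' I (Finset.mem_univ j0)
      have hΦ0 : Φ wstar ≤ Φ 0 := isMinOn_iff.1 hwmin 0 hK0
      linarith
  exact ⟨wstar, fun w => hmain w⟩
end
end

section
/- Let μ, ν, α be finite Borel measures on ℝ^d with μ(ℝ^d) = ν(ℝ^d) and W_1(μ, ν) < ∞. Then W_1(α + μ, α + ν) = W_1(μ, ν). -/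
open MeasureTheory ENNReal ProbabilityTheory Filter

noncomputable section

namespace W1AuxProof

lemma measure_eq_of_le_of_univ {Y : Type*} [MeasurableSpace Y] (m1 m2 : Measure Y)
    [IsFiniteMeasure m2] (hle : m1 ≤ m2) (huniv : m1 Set.univ = m2 Set.univ) : m1 = m2 := by
  ext s hs
  refine le_antisymm (hle s) ?_
  have h2 : m1 sᶜ ≤ m2 sᶜ := hle sᶜ
  have hadd1 : m1 s + m1 sᶜ = m1 Set.univ := measure_add_measure_compl hs
  have hadd2 : m2 s + m2 sᶜ = m2 Set.univ := measure_add_measure_compl hs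
  have : m2 s + m2 sᶜ ≤ m1 s + m2 sᶜ := by
    rw [hadd2, ← huniv, ← hadd1]
    exact add_le_add le_rfl h2
  exact (ENNReal.add_le_add_iff_right (measure_ne_top m2 sᶜ)).mp this

variable {X : Type*} [NormedAddCommGroup X] [MeasurableSpace X] [BorelSpace X]
  [SecondCountableTopology X] [StandardBorelSpace X] [Nonempty X]

/-- One-step transition: keep first coordinate, move second through `K`. -/
def stepK (K : Kernel X X) : Kernel (X × X) (X × X) :=
  (Kernel.deterministic (Prod.fst : X × X → X) measurable_fst) ×ₖ
    (K.comap (Prod.snd : X × X → X) measurable_snd)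

instance (K : Kernel X X) [IsMarkovKernel K] : IsMarkovKernel (stepK K) := by
  rw [stepK]; infer_instance

omit [NormedAddCommGroup X] [BorelSpace X] [SecondCountableTopology X] [StandardBorelSpace X]
  [Nonempty X] in
lemma stepK_apply (K : Kernel X X) [IsMarkovKernel K] (p : X × X) :
    stepK K p = (Measure.dirac p.1).prod (K p.2) := by
  rw [stepK, Kernel.prod_apply, Kernel.deterministic_apply, Kernel.comap_apply]

/-- The chain of "still travelling" joint measures. -/
def chain (K : Kernel X X) (f : X → ℝ≥0∞) (m0 : Measure (X × X)) : ℕ → Measure (X × X)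
  | 0 => m0
  | n + 1 => ((chain K f m0 n).bind (stepK K)).withDensity fun p => f p.2

set_option maxHeartbeats 2000000 in
theorem le_cost (μ ν α : Measure X) [IsFiniteMeasure μ] [IsFiniteMeasure ν] [IsFiniteMeasure α]
    (hmass : μ Set.univ = ν Set.univ)
    (π : Measure (X × X)) (h1 : π.map Prod.fst = α + μ) (h2 : π.map Prod.snd = α + ν) :
    ⨅ (π' : Measure (X × X)) (_ : π'.map Prod.fst = μ) (_ : π'.map Prod.snd = ν),
      ∫⁻ z, ENNReal.ofReal ‖z.1 - z.2‖ ∂π' ≤ ∫⁻ z, ENNReal.ofReal ‖z.1 - z.2‖ ∂π := by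
  classical
  have hπfin : IsFiniteMeasure π := by
    constructor
    have : π Set.univ = (π.map Prod.fst) Set.univ := by
      rw [Measure.map_apply measurable_fst MeasurableSet.univ]; rfl
    rw [this, h1]; exact measure_lt_top _ _
  have hdiag : Measurable fun x : X => (x, x) := by exact measurable_id.prodMk measurable_id
  set c : X × X → ℝ≥0∞ := fun p => ENNReal.ofReal ‖p.1 - p.2‖ with hc_def
  have hc : Measurable c := (measurable_fst.sub measurable_snd).norm.ennreal_ofReal
  set K : Kernel X X := π.condKernel with hK_def
  have hπeq : (α + μ) ⊗ₘ K = π := by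
    have h := π.disintegrate π.condKernel
    have hfst : π.fst = α + μ := h1
    rwa [hfst] at h
  set L : Kernel (X × X) (X × X) := stepK K with hL_def
  have hbind_apply : ∀ (m : Measure (X × X)) {s : Set (X × X)}, MeasurableSet s →
      (m.bind ⇑L) s = ∫⁻ p, L p s ∂m := fun m s hs => Measure.bind_apply hs L.measurable.aemeasurable
  have hKbind_apply : ∀ (m : Measure X) {s : Set X}, MeasurableSet s →
      (m.bind ⇑K) s = ∫⁻ x, K x s ∂m := fun m s hs => Measure.bind_apply hs K.measurable.aemeasurable
  have hlintL : ∀ (m : Measure (X × X)) (h : X × X → ℝ≥0∞), Measurable h →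
      ∫⁻ q, h q ∂(m.bind ⇑L) = ∫⁻ p, ∫⁻ z, h (p.1, z) ∂(K p.2) ∂m := by
    intro m h hh
    rw [Measure.lintegral_bind L.measurable.aemeasurable hh.aemeasurable]
    refine lintegral_congr fun p => ?_
    rw [hL_def, stepK_apply, lintegral_prod _ hh.aemeasurable]
    exact lintegral_dirac' _ hh.lintegral_prod_right'
  -- marginals of bind
  have hfst_bind : ∀ m : Measure (X × X), (m.bind ⇑L).map Prod.fst = m.map Prod.fst := by
    intro m
    ext s hs
    rw [Measure.map_apply measurable_fst hs, Measure.map_apply measurable_fst hs,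
      hbind_apply m (measurable_fst hs)]
    have h' : ∀ p : X × X, L p (Prod.fst ⁻¹' s) = (Prod.fst ⁻¹' s).indicator 1 p := by
      intro p
      have hpre : (Prod.fst ⁻¹' s : Set (X × X)) = s ×ˢ Set.univ := by ext q; simp
      rw [hL_def, stepK_apply, hpre, Measure.prod_prod, measure_univ, mul_one,
        Measure.dirac_apply' _ hs]
      by_cases hp : p.1 ∈ s
      · simp [hp, Set.indicator_of_mem, Set.mem_preimage]
      · simp [hp, Set.indicator_of_notMem, Set.mem_preimage]
    simp_rw [h']
    rw [lintegral_indicator_one (measurable_fst hs)]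
  have hsnd_bind : ∀ m : Measure (X × X),
      (m.bind ⇑L).map Prod.snd = (m.map Prod.snd).bind ⇑K := by
    intro m
    ext s hs
    rw [Measure.map_apply measurable_snd hs, hbind_apply m (measurable_snd hs),
      hKbind_apply _ hs, lintegral_map (K.measurable_coe hs) measurable_snd]
    refine lintegral_congr fun p => ?_
    have hpre : (Prod.snd ⁻¹' s : Set (X × X)) = Set.univ ×ˢ s := by ext q; simp
    rw [hL_def, stepK_apply, hpre, Measure.prod_prod, measure_univ, one_mul]
  have hmass_bindL : ∀ m : Measure (X × X), (m.bind ⇑L) Set.univ = m Set.univ := by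
    intro m
    rw [hbind_apply m MeasurableSet.univ]
    simp [measure_univ]
  -- total transition of K
  have hKtot : (α + μ).bind ⇑K = α + ν := by
    ext s hs
    rw [hKbind_apply _ hs, ← h2, ← hπeq, Measure.map_apply measurable_snd hs,
      Measure.compProd_apply (measurable_snd hs)]
    rfl
  -- densities
  set B : Measure X := α + ν with hB_def
  set f : X → ℝ≥0∞ := α.rnDeriv B with hf_def
  set g : X → ℝ≥0∞ := ν.rnDeriv B with hg_def
  have hfmeas : Measurable f := Measure.measurable_rnDeriv _ _
  have hgmeas : Measurable g := Measure.measurable_rnDeriv _ _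
  have hBf : B.withDensity f = α := by
    refine Measure.withDensity_rnDeriv_eq _ _ (Measure.absolutelyContinuous_of_le ?_)
    exact Measure.le_iff.mpr fun s hs => by rw [hB_def, Measure.add_apply]; exact le_self_add
  have hBg : B.withDensity g = ν := by
    refine Measure.withDensity_rnDeriv_eq _ _ (Measure.absolutelyContinuous_of_le ?_)
    exact Measure.le_iff.mpr fun s hs => by rw [hB_def, Measure.add_apply]; exact le_add_self
  have hfg : ∀ᵐ y ∂B, f y + g y = 1 := by
    have ha := Measure.rnDeriv_add α ν B
    have hb := Measure.rnDeriv_self B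
    rw [← hB_def] at ha
    filter_upwards [ha, hb] with y hy1 hy2
    rw [hf_def, hg_def, ← Pi.add_apply (α.rnDeriv B) (ν.rnDeriv B), ← hy1, hy2]
  -- algebra helpers
  have h_bind_add : ∀ m m' : Measure X, (m + m').bind ⇑K = m.bind ⇑K + m'.bind ⇑K := by
    intro m m'
    ext s hs
    rw [hKbind_apply _ hs, Measure.add_apply, hKbind_apply _ hs, hKbind_apply _ hs,
      lintegral_add_measure]
  have h_bind_zero : (0 : Measure X).bind ⇑K = 0 := by
    ext s hs
    rw [hKbind_apply _ hs, lintegral_zero_measure]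
    rfl
  have h_wd_zero : ∀ h : X → ℝ≥0∞, (0 : Measure X).withDensity h = 0 := by
    intro h
    ext s hs
    rw [withDensity_apply _ hs, Measure.restrict_zero, lintegral_zero_measure]
    rfl
  have h_bind_mono : ∀ {m m' : Measure X}, m ≤ m' → m.bind ⇑K ≤ m'.bind ⇑K := by
    intro m m' hle
    refine Measure.le_iff.mpr fun s hs => ?_
    rw [hKbind_apply _ hs, hKbind_apply _ hs]
    exact lintegral_mono' hle le_rfl
  have h_wd_mono : ∀ (h : X → ℝ≥0∞) {m m' : Measure X}, m ≤ m' →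
      m.withDensity h ≤ m'.withDensity h := by
    intro h m m' hle
    refine Measure.le_iff.mpr fun s hs => ?_
    rw [withDensity_apply _ hs, withDensity_apply _ hs]
    exact lintegral_mono' (Measure.restrict_mono subset_rfl hle) le_rfl
  have h_wd_snd : ∀ (m : Measure (X × X)) (h : X → ℝ≥0∞), Measurable h →
      ((m.withDensity fun p => h p.2).map Prod.snd) = (m.map Prod.snd).withDensity h := by
    intro m h hh
    ext s hs
    rw [Measure.map_apply measurable_snd hs, withDensity_apply _ (measurable_snd hs),
      withDensity_apply _ hs, Measure.restrict_map measurable_snd hs,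
      lintegral_map hh measurable_snd]
  -- the chain
  set ρ : ℕ → Measure (X × X) := chain K f (μ.map fun x => (x, x)) with hρ_def
  have hρ0 : ρ 0 = μ.map fun x => (x, x) := rfl
  have hρs : ∀ n, ρ (n + 1) = ((ρ n).bind ⇑L).withDensity fun p => f p.2 := fun n => rfl
  set σ : ℕ → Measure (X × X) := fun n => ((ρ n).bind ⇑L).withDensity fun p => g p.2 with hσ_def
  set μk : ℕ → Measure X := fun n => (ρ n).map Prod.snd with hμk_def
  set S : ℕ → Measure X := fun n => ∑ k ∈ Finset.range n, μk k with hS_def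
  have hμ0 : μk 0 = μ := by
    rw [hμk_def]
    simp only [hρ0]
    rw [Measure.map_map measurable_snd (hdiag)]
    simp [Function.comp_def]
  have hμsucc : ∀ n, μk (n + 1) = ((μk n).bind ⇑K).withDensity f := by
    intro n
    rw [hμk_def]
    simp only [hρs n]
    rw [h_wd_snd _ _ hfmeas, hsnd_bind]
  have hSsucc : ∀ n, S (n + 1) = μ + ((S n).bind ⇑K).withDensity f := by
    intro n
    induction n with
    | zero =>
      simp only [hS_def, zero_add, Finset.range_one, Finset.sum_singleton, Finset.range_zero,
        Finset.sum_empty, hμ0, h_bind_zero, h_wd_zero, add_zero]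
    | succ n ih =>
      have hS1 : S (n + 1 + 1) = S (n + 1) + μk (n + 1) := by
        simp only [hS_def, Finset.sum_range_succ]
      have hS2 : S (n + 1) = S n + μk n := by
        simp only [hS_def, Finset.sum_range_succ]
      calc S (n + 1 + 1) = S (n + 1) + μk (n + 1) := hS1
      _ = (μ + ((S n).bind ⇑K).withDensity f) + ((μk n).bind ⇑K).withDensity f := by
            rw [ih, hμsucc n]
      _ = μ + (((S n).bind ⇑K).withDensity f + ((μk n).bind ⇑K).withDensity f) :=
            add_assoc _ _ _
      _ = μ + ((S n + μk n).bind ⇑K).withDensity f := by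
            rw [h_bind_add, withDensity_add_measure]
      _ = μ + ((S (n + 1)).bind ⇑K).withDensity f := by rw [hS2]
  have hInv : ∀ n, S n ≤ α + μ := by
    intro n
    induction n with
    | zero =>
      have h0 : S 0 = 0 := by simp [hS_def]
      rw [h0]; exact Measure.zero_le _
    | succ n ih =>
      rw [hSsucc n]
      have hstep : ((S n).bind ⇑K).withDensity f ≤ α := by
        calc ((S n).bind ⇑K).withDensity f ≤ ((α + μ).bind ⇑K).withDensity f :=
              h_wd_mono _ (h_bind_mono ih)
        _ = B.withDensity f := by rw [hKtot, hB_def]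
        _ = α := hBf
      calc μ + ((S n).bind ⇑K).withDensity f ≤ μ + α := add_le_add le_rfl hstep
      _ = α + μ := add_comm _ _
  have hμk_le : ∀ n, μk n ≤ α + μ := by
    intro n
    refine le_trans ?_ (hInv (n + 1))
    have hS2 : S (n + 1) = S n + μk n := by
      simp only [hS_def, Finset.sum_range_succ]
    rw [hS2]
    exact Measure.le_iff.mpr fun s hs => by rw [Measure.add_apply]; exact le_add_self
  -- a.e. f + g = 1 on intermediate measures
  have hone : ∀ n, (fun p : X × X => g p.2 + f p.2) =ᵐ[(ρ n).bind ⇑L] (fun _ => 1) := by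
    intro n
    have hsnd_le : ((ρ n).bind ⇑L).map Prod.snd ≤ B := by
      rw [hsnd_bind]
      calc (μk n).bind ⇑K ≤ (α + μ).bind ⇑K := h_bind_mono (hμk_le n)
      _ = B := by rw [hKtot, hB_def]
    have hBnull : B {y | ¬ (f y + g y = 1)} = 0 := ae_iff.mp hfg
    have hsetmeas : MeasurableSet {y | ¬ (f y + g y = 1)} :=
      ((hfmeas.add hgmeas) (measurableSet_singleton 1)).compl
    have hnull : ((ρ n).bind ⇑L) (Prod.snd ⁻¹' {y | ¬ (f y + g y = 1)}) = 0 := by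
      rw [← Measure.map_apply measurable_snd hsetmeas]
      exact le_antisymm (le_trans (hsnd_le _) (le_of_eq hBnull)) bot_le
    refine ae_iff.mpr (measure_mono_null ?_ hnull)
    intro p hp
    simp only [Set.mem_setOf_eq] at hp ⊢
    intro h'
    exact hp (by rw [add_comm] at h'; exact h')
  have hsplit : ∀ n, σ n + ρ (n + 1) = (ρ n).bind ⇑L := by
    intro n
    rw [hρs n]
    ext s hs
    rw [Measure.add_apply, withDensity_apply _ hs, withDensity_apply _ hs,
      ← lintegral_add_left (show Measurable fun p : X × X => g p.2 from
        hgmeas.comp measurable_snd)]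
    have h1 : (fun p : X × X => g p.2 + f p.2) =ᵐ[((ρ n).bind ⇑L).restrict s]
        (fun _ => 1) := ae_restrict_of_ae (hone n)
    rw [lintegral_congr_ae h1, setLIntegral_one]
  -- fst marginals
  have hρ0fst : (ρ 0).map Prod.fst = μ := by
    rw [hρ0, Measure.map_map measurable_fst (hdiag)]
    simp [Function.comp_def]
  have hfst_dec : ∀ n, (σ n).map Prod.fst + (ρ (n + 1)).map Prod.fst = (ρ n).map Prod.fst := by
    intro n
    rw [← Measure.map_add _ _ measurable_fst, hsplit n, hfst_bind]
  have hfst_sum : ∀ n,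
      (∑ k ∈ Finset.range n, (σ k).map Prod.fst) + (ρ n).map Prod.fst = μ := by
    intro n
    induction n with
    | zero => simpa using hρ0fst
    | succ n ih => rw [Finset.sum_range_succ, add_assoc, hfst_dec n, ih]
  -- snd marginals
  have hsnd_σ : ∀ n, (σ n).map Prod.snd = ((μk n).bind ⇑K).withDensity g := by
    intro n
    rw [hσ_def]
    rw [h_wd_snd _ _ hgmeas, hsnd_bind]
  have hsnd_sum : ∀ n,
      (∑ k ∈ Finset.range n, (σ k).map Prod.snd) = ((S n).bind ⇑K).withDensity g := by
    intro n
    induction n with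
    | zero =>
      simp only [Finset.range_zero, Finset.sum_empty, hS_def, h_bind_zero, h_wd_zero]
    | succ n ih =>
      have hS2 : S (n + 1) = S n + μk n := by
        simp only [hS_def, Finset.sum_range_succ]
      rw [Finset.sum_range_succ, ih, hsnd_σ n, ← withDensity_add_measure, ← h_bind_add, ← hS2]
  have hsnd_sum_le : ∀ n, (∑ k ∈ Finset.range n, (σ k).map Prod.snd) ≤ ν := by
    intro n
    rw [hsnd_sum n]
    calc ((S n).bind ⇑K).withDensity g ≤ ((α + μ).bind ⇑K).withDensity g :=
          h_wd_mono _ (h_bind_mono (hInv n))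
    _ = B.withDensity g := by rw [hKtot, hB_def]
    _ = ν := hBg
  -- masses
  have hρmass0 : ρ 0 Set.univ = μ Set.univ := by
    rw [hρ0, Measure.map_apply (hdiag) MeasurableSet.univ]
    rfl
  have hσmass : ∀ n, σ n Set.univ + ρ (n + 1) Set.univ = ρ n Set.univ := by
    intro n
    have h' := congrArg (fun m : Measure (X × X) => m Set.univ) (hsplit n)
    simp only [Measure.add_apply] at h'
    rw [h', hmass_bindL]
  have hmass_sum : ∀ n, (∑ k ∈ Finset.range n, σ k Set.univ) + ρ n Set.univ = μ Set.univ := by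
    intro n
    induction n with
    | zero => simpa using hρmass0
    | succ n ih => rw [Finset.sum_range_succ, add_assoc, hσmass n, ih]
  have hρμk_mass : ∀ n, ρ n Set.univ = μk n Set.univ := by
    intro n
    rw [hμk_def]
    rw [Measure.map_apply measurable_snd MeasurableSet.univ]
    rfl
  have htsum_ρ : ∑' n, ρ n Set.univ ≤ (α + μ) Set.univ := by
    rw [ENNReal.tsum_eq_iSup_nat]
    refine iSup_le fun n => ?_
    have : ∑ k ∈ Finset.range n, ρ k Set.univ = S n Set.univ := by
      rw [hS_def, Measure.finset_sum_apply]
      exact Finset.sum_congr rfl fun k _ => hρμk_mass k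
    rw [this]
    exact hInv n Set.univ
  have hρ_tendsto : Tendsto (fun n => ρ n Set.univ) atTop (nhds 0) :=
    ENNReal.tendsto_atTop_zero_of_tsum_ne_top (lt_of_le_of_lt htsum_ρ (measure_lt_top _ _)).ne
  have htotalmass : ∑' n, σ n Set.univ = μ Set.univ := by
    refine le_antisymm ?_ ?_
    · rw [ENNReal.tsum_eq_iSup_nat]
      refine iSup_le fun n => ?_
      calc ∑ k ∈ Finset.range n, σ k Set.univ
          ≤ (∑ k ∈ Finset.range n, σ k Set.univ) + ρ n Set.univ := le_self_add
      _ = μ Set.univ := hmass_sum n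
    · refine ENNReal.le_of_forall_pos_le_add fun ε hε hfin' => ?_
      obtain ⟨n, hn⟩ := (hρ_tendsto.eventually_lt_const
        (by exact_mod_cast hε : (0 : ℝ≥0∞) < ε)).exists
      calc μ Set.univ = (∑ k ∈ Finset.range n, σ k Set.univ) + ρ n Set.univ :=
            (hmass_sum n).symm
      _ ≤ (∑' k, σ k Set.univ) + ε := add_le_add (ENNReal.sum_le_tsum _) hn.le
  -- the candidate coupling
  have hmap_sum : ∀ (h : X × X → X), Measurable h →
      (Measure.sum σ).map h = Measure.sum fun n => (σ n).map h := by
    intro h hh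
    ext s hs
    rw [Measure.map_apply hh hs, Measure.sum_apply _ (hh hs), Measure.sum_apply _ hs]
    exact tsum_congr fun n => (Measure.map_apply hh hs).symm
  have hfst_tot : (Measure.sum σ).map Prod.fst = μ := by
    rw [hmap_sum _ measurable_fst]
    refine measure_eq_of_le_of_univ _ _ ?_ ?_
    · refine Measure.le_iff.mpr fun s hs => ?_
      rw [Measure.sum_apply _ hs, ENNReal.tsum_eq_iSup_nat]
      refine iSup_le fun n => ?_
      calc ∑ k ∈ Finset.range n, ((σ k).map Prod.fst) s
          = (∑ k ∈ Finset.range n, (σ k).map Prod.fst) s := (Measure.finset_sum_apply _ _ _).symm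
      _ ≤ ((∑ k ∈ Finset.range n, (σ k).map Prod.fst) + (ρ n).map Prod.fst) s := by
            rw [Measure.add_apply]; exact le_self_add
      _ = μ s := by rw [hfst_sum n]
    · rw [Measure.sum_apply _ MeasurableSet.univ]
      calc ∑' n, ((σ n).map Prod.fst) Set.univ = ∑' n, σ n Set.univ := by
            refine tsum_congr fun n => ?_
            rw [Measure.map_apply measurable_fst MeasurableSet.univ]
            rfl
      _ = μ Set.univ := htotalmass
  have hsnd_tot : (Measure.sum σ).map Prod.snd = ν := by
    rw [hmap_sum _ measurable_snd]
    refine measure_eq_of_le_of_univ _ _ ?_ ?_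
    · refine Measure.le_iff.mpr fun s hs => ?_
      rw [Measure.sum_apply _ hs, ENNReal.tsum_eq_iSup_nat]
      refine iSup_le fun n => ?_
      calc ∑ k ∈ Finset.range n, ((σ k).map Prod.snd) s
          = (∑ k ∈ Finset.range n, (σ k).map Prod.snd) s := (Measure.finset_sum_apply _ _ _).symm
      _ ≤ ν s := hsnd_sum_le n s
    · rw [Measure.sum_apply _ MeasurableSet.univ]
      calc ∑' n, ((σ n).map Prod.snd) Set.univ = ∑' n, σ n Set.univ := by
            refine tsum_congr fun n => ?_
            rw [Measure.map_apply measurable_snd MeasurableSet.univ]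
            rfl
      _ = μ Set.univ := htotalmass
      _ = ν Set.univ := hmass
  -- cost estimates
  set F : X → ℝ≥0∞ := fun x => ∫⁻ z, c (x, z) ∂(K x) with hF_def
  have hF : Measurable F := hc.lintegral_kernel_prod_right'
  have hC : ∫⁻ z, c z ∂π = ∫⁻ x, F x ∂(α + μ) := by
    rw [← hπeq, Measure.lintegral_compProd hc]
  have hcost_ρ0 : ∫⁻ p, c p ∂(ρ 0) = 0 := by
    rw [hρ0, lintegral_map hc (hdiag)]
    simp [hc_def]
  have hstep_cost : ∀ n, ∫⁻ p, c p ∂((ρ n).bind ⇑L) ≤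
      ∫⁻ p, c p ∂(ρ n) + ∫⁻ y, F y ∂(μk n) := by
    intro n
    rw [hlintL _ _ hc]
    have hb : ∫⁻ y, F y ∂(μk n) = ∫⁻ p, F p.2 ∂(ρ n) := by
      rw [hμk_def]
      exact lintegral_map hF measurable_snd
    rw [hb, ← lintegral_add_left hc]
    refine lintegral_mono fun p => ?_
    have hinner : ∫⁻ z, c (p.1, z) ∂(K p.2) ≤
        ∫⁻ z, (c p + c (p.2, z)) ∂(K p.2) := by
      refine lintegral_mono fun z => ?_
      simp only [hc_def]
      calc ENNReal.ofReal ‖p.1 - z‖ ≤ ENNReal.ofReal (‖p.1 - p.2‖ + ‖p.2 - z‖) := by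
            refine ENNReal.ofReal_le_ofReal ?_
            calc ‖p.1 - z‖ = dist p.1 z := (dist_eq_norm _ _).symm
            _ ≤ dist p.1 p.2 + dist p.2 z := dist_triangle _ _ _
            _ = ‖p.1 - p.2‖ + ‖p.2 - z‖ := by rw [dist_eq_norm, dist_eq_norm]
      _ = ENNReal.ofReal ‖p.1 - p.2‖ + ENNReal.ofReal ‖p.2 - z‖ :=
            ENNReal.ofReal_add (norm_nonneg _) (norm_nonneg _)
    refine le_trans hinner (le_of_eq ?_)
    rw [lintegral_add_left measurable_const, lintegral_const, measure_univ, mul_one, hF_def]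
  have hcost_key : ∀ n, (∑ k ∈ Finset.range n, ∫⁻ p, c p ∂(σ k)) + ∫⁻ p, c p ∂(ρ n) ≤
      ∑ k ∈ Finset.range n, ∫⁻ y, F y ∂(μk k) := by
    intro n
    induction n with
    | zero => simpa using le_of_eq hcost_ρ0
    | succ n ih =>
      have hsplitc : ∫⁻ p, c p ∂(σ n) + ∫⁻ p, c p ∂(ρ (n + 1)) =
          ∫⁻ p, c p ∂((ρ n).bind ⇑L) := by
        rw [← lintegral_add_measure, hsplit n]
      calc (∑ k ∈ Finset.range (n + 1), ∫⁻ p, c p ∂(σ k)) + ∫⁻ p, c p ∂(ρ (n + 1))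
          = (∑ k ∈ Finset.range n, ∫⁻ p, c p ∂(σ k)) +
            (∫⁻ p, c p ∂(σ n) + ∫⁻ p, c p ∂(ρ (n + 1))) := by
            rw [Finset.sum_range_succ, add_assoc]
      _ = (∑ k ∈ Finset.range n, ∫⁻ p, c p ∂(σ k)) + ∫⁻ p, c p ∂((ρ n).bind ⇑L) := by
            rw [hsplitc]
      _ ≤ (∑ k ∈ Finset.range n, ∫⁻ p, c p ∂(σ k)) +
            (∫⁻ p, c p ∂(ρ n) + ∫⁻ y, F y ∂(μk n)) := add_le_add le_rfl (hstep_cost n)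
      _ = ((∑ k ∈ Finset.range n, ∫⁻ p, c p ∂(σ k)) + ∫⁻ p, c p ∂(ρ n)) +
            ∫⁻ y, F y ∂(μk n) := by ring
      _ ≤ (∑ k ∈ Finset.range n, ∫⁻ y, F y ∂(μk k)) + ∫⁻ y, F y ∂(μk n) :=
            add_le_add ih le_rfl
      _ = ∑ k ∈ Finset.range (n + 1), ∫⁻ y, F y ∂(μk k) := (Finset.sum_range_succ _ _).symm
  have hb_sum_le : ∀ n, (∑ k ∈ Finset.range n, ∫⁻ y, F y ∂(μk k)) ≤ ∫⁻ z, c z ∂π := by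
    intro n
    rw [hC]
    calc ∑ k ∈ Finset.range n, ∫⁻ y, F y ∂(μk k) = ∫⁻ y, F y ∂(S n) := by
          rw [hS_def, lintegral_finset_sum_measure]
    _ ≤ ∫⁻ y, F y ∂(α + μ) := lintegral_mono' (hInv n) le_rfl
  have hcost_tot : ∫⁻ p, c p ∂(Measure.sum σ) ≤ ∫⁻ z, c z ∂π := by
    rw [lintegral_sum_measure, ENNReal.tsum_eq_iSup_nat]
    refine iSup_le fun n => ?_
    exact le_trans (le_trans le_self_add (hcost_key n)) (hb_sum_le n)
  exact le_trans (iInf_le_of_le (Measure.sum σ)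
    (iInf_le_of_le hfst_tot (iInf_le_of_le hsnd_tot le_rfl))) hcost_tot

theorem cost_add_le (μ ν α : Measure X) [IsFiniteMeasure α]
    (π : Measure (X × X)) (h1 : π.map Prod.fst = μ) (h2 : π.map Prod.snd = ν) :
    ⨅ (π' : Measure (X × X)) (_ : π'.map Prod.fst = α + μ) (_ : π'.map Prod.snd = α + ν),
      ∫⁻ z, ENNReal.ofReal ‖z.1 - z.2‖ ∂π' ≤ ∫⁻ z, ENNReal.ofReal ‖z.1 - z.2‖ ∂π := by
  have hdiag : Measurable fun x : X => (x, x) := by exact measurable_id.prodMk measurable_id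
  set Δ : Measure (X × X) := α.map fun x => (x, x) with hΔ_def
  have hΔfst : Δ.map Prod.fst = α := by
    rw [hΔ_def, Measure.map_map measurable_fst hdiag]
    simp [Function.comp_def]
  have hΔsnd : Δ.map Prod.snd = α := by
    rw [hΔ_def, Measure.map_map measurable_snd hdiag]
    simp [Function.comp_def]
  have hfst : (Δ + π).map Prod.fst = α + μ := by
    rw [Measure.map_add _ _ measurable_fst, hΔfst, h1]
  have hsnd : (Δ + π).map Prod.snd = α + ν := by
    rw [Measure.map_add _ _ measurable_snd, hΔsnd, h2]
  have hcost : ∫⁻ z, ENNReal.ofReal ‖z.1 - z.2‖ ∂(Δ + π) =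
      ∫⁻ z, ENNReal.ofReal ‖z.1 - z.2‖ ∂π := by
    rw [lintegral_add_measure]
    have hzero : ∫⁻ z, ENNReal.ofReal ‖z.1 - z.2‖ ∂Δ = 0 := by
      rw [hΔ_def, lintegral_map (show Measurable fun z : X × X => ENNReal.ofReal ‖z.1 - z.2‖ from (measurable_fst.sub measurable_snd).norm.ennreal_ofReal) hdiag]
      simp
    rw [hzero, zero_add]
  exact le_trans (iInf_le_of_le (Δ + π) (iInf_le_of_le hfst (iInf_le_of_le hsnd le_rfl)))
    (le_of_eq hcost)

end W1AuxProof

/-- The Wasserstein distance of order 1 between finite measures of equal total mass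
on `ℝ^d`: the infimum of `∫ ‖x - y‖ dπ` over all couplings `π` of `μ` and `ν`
(possibly `∞`). -/
def W1 {d : ℕ} (μ ν : Measure (EuclideanSpace ℝ (Fin d))) : ℝ≥0∞ :=
  ⨅ (π : Measure (EuclideanSpace ℝ (Fin d) × EuclideanSpace ℝ (Fin d)))
    (_ : π.map Prod.fst = μ) (_ : π.map Prod.snd = ν),
    ∫⁻ z, ENNReal.ofReal ‖z.1 - z.2‖ ∂π

/-- For finite Borel measures `μ, ν, α` on `ℝ^d` with
`μ(ℝ^d) = ν(ℝ^d)` and `W₁(μ, ν) < ∞`, `W₁(α + μ, α + ν) = W₁(μ, ν)`. -/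
theorem W1_add_common_eq
    {d : ℕ} (μ ν α : Measure (EuclideanSpace ℝ (Fin d)))
    [IsFiniteMeasure μ] [IsFiniteMeasure ν] [IsFiniteMeasure α]
    (hmass : μ Set.univ = ν Set.univ)
    (hfin : W1 μ ν < ⊤) :
    W1 (α + μ) (α + ν) = W1 μ ν := by
  refine le_antisymm ?_ ?_
  · rw [W1, W1]
    refine le_iInf fun π => le_iInf fun h1 => le_iInf fun h2 => ?_
    exact W1AuxProof.cost_add_le μ ν α π h1 h2
  · rw [W1, W1]
    refine le_iInf fun π => le_iInf fun h1 => le_iInf fun h2 => ?_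
    exact W1AuxProof.le_cost μ ν α hmass π h1 h2
end
end

section
/- Let μ, ν, α be finite Borel measures on ℝ^d with μ(ℝ^d) = ν(ℝ^d), let π be a coupling of μ and ν that is cyclically monotone for the Euclidean cost, and let α_Δ be the push-forward of α under the map x ↦ (x, x). Then π + α_Δ is a coupling of μ + α and ν + α that is again cyclically monotone for the Euclidean cost. -/
open MeasureTheory ENNReal

noncomputable section

/-- The (topological) support of a measure `π`: the set of points all of whose open
neighbourhoods have positive measure. -/
def measSupport {α : Type*} [TopologicalSpace α] [MeasurableSpace α]
    (π : Measure α) : Set α :=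
  {z | ∀ U : Set α, IsOpen U → z ∈ U → π U ≠ 0}

/-- A measure `π` on `ℝ^d × ℝ^d` is cyclically monotone for the Euclidean cost if for
every `N` and all pairs `(x_1,y_1), …, (x_N,y_N)` in its support,
`∑ᵢ ‖xᵢ - yᵢ‖ ≤ ∑ᵢ ‖xᵢ - y_{i+1}‖`, indices taken cyclically. -/
def CyclMonotone {d : ℕ}
    (π : Measure (EuclideanSpace ℝ (Fin d) × EuclideanSpace ℝ (Fin d))) : Prop :=
  ∀ (N : ℕ) (x y : Fin (N + 1) → EuclideanSpace ℝ (Fin d)),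
    (∀ i, (x i, y i) ∈ measSupport π) →
    ∑ i, ‖x i - y i‖ ≤ ∑ i, ‖x i - y (i + 1)‖


lemma fin_rot {M : ℕ} (j : Fin (M+2)) : Fin.last (M+1) + (j + 1) = j := by
  have : Fin.last (M+1) + 1 = 0 := by
    apply Fin.ext
    simp [Fin.add_def, Fin.last]
  rw [add_comm j 1, ← add_assoc, this, zero_add]

lemma fin_castSucc_add_one {M : ℕ} (i : Fin (M+1)) (hi : i ≠ Fin.last M) :
    ((i + 1).castSucc : Fin (M+2)) = i.castSucc + 1 := by
  have hlt : i.val < M := Fin.val_lt_last hi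
  apply Fin.ext
  have h1 : (i.val + 1) % (M+1) = i.val + 1 := Nat.mod_eq_of_lt (by omega)
  have h2 : (i.val + 1) % (M+2) = i.val + 1 := Nat.mod_eq_of_lt (by omega)
  simp [Fin.add_def, Fin.castSucc, Fin.castAdd, Fin.castLE, h1, h2]

lemma key {E : Type*} [NormedAddCommGroup E] (S : Set (E × E))
    (hcm : ∀ N (x y : Fin (N+1) → E), (∀ i, (x i, y i) ∈ S) →
      ∑ i, ‖x i - y i‖ ≤ ∑ i, ‖x i - y (i+1)‖) :
    ∀ N (x y : Fin (N+1) → E), (∀ i, (x i, y i) ∈ S ∨ x i = y i) →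
      ∑ i, ‖x i - y i‖ ≤ ∑ i, ‖x i - y (i+1)‖ := by
  intro N
  induction N with
  | zero =>
    intro x y h
    apply le_of_eq
    refine Finset.sum_congr rfl fun i _ => ?_
    have : i + 1 = i := by omega
    rw [this]
  | succ M ih =>
    intro x y h
    by_cases hall : ∀ i, (x i, y i) ∈ S
    · exact hcm _ x y hall
    · push_neg at hall
      obtain ⟨j, hj⟩ := hall
      have hdiag : x j = y j := (h j).resolve_left hj
      set k : Fin (M+2) := j + 1 with hk
      set x' : Fin (M+2) → E := fun i => x (i + k) with hx'
      set y' : Fin (M+2) → E := fun i => y (i + k) with hy'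
      have hL : ∑ i, ‖x i - y i‖ = ∑ i, ‖x' i - y' i‖ :=
        (Equiv.sum_comp (Equiv.addRight k) (fun i => ‖x i - y i‖)).symm
      have hR : ∑ i, ‖x i - y (i+1)‖ = ∑ i, ‖x' i - y' (i+1)‖ := by
        rw [← Equiv.sum_comp (Equiv.addRight k) (fun i => ‖x i - y (i+1)‖)]
        refine Finset.sum_congr rfl fun i _ => ?_
        simp only [hx', hy', Equiv.coe_addRight]
        rw [add_right_comm i k 1]
      rw [hL, hR]
      have hlk : Fin.last (M+1) + k = j := by rw [hk]; exact fin_rot j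
      have hlast : x' (Fin.last (M+1)) = y' (Fin.last (M+1)) := by
        simp only [hx', hy', hlk]
        exact hdiag
      -- reduced cycle
      set xx : Fin (M+1) → E := fun i => x' i.castSucc with hxx
      set yy : Fin (M+1) → E := fun i => y' i.castSucc with hyy
      have hred : ∀ i, (xx i, yy i) ∈ S ∨ xx i = yy i := fun i => h _
      have hih := ih xx yy hred
      rw [Fin.sum_univ_castSucc (fun i => ‖x' i - y' i‖),
        Fin.sum_univ_castSucc (fun i => ‖x' i - y' (i+1)‖)]
      have h0 : ‖x' (Fin.last (M+1)) - y' (Fin.last (M+1))‖ = 0 := by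
        rw [hlast, sub_self, norm_zero]
      rw [h0, add_zero]
      refine le_trans hih ?_
      have hstep : ∀ i : Fin (M+1), ‖xx i - yy (i+1)‖ ≤
          ‖x' i.castSucc - y' (i.castSucc + 1)‖ +
          (if i = Fin.last M then ‖x' (Fin.last (M+1)) - y' (Fin.last (M+1) + 1)‖ else 0) := by
        intro i
        by_cases hi : i = Fin.last M
        · subst hi
          simp only [if_pos rfl]
          have h1 : ((Fin.last M + 1 : Fin (M+1)).castSucc : Fin (M+2)) = 0 := by
            apply Fin.ext
            simp [Fin.add_def, Fin.last]
          have h2 : ((Fin.last M).castSucc + 1 : Fin (M+2)) = Fin.last (M+1) := by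
            apply Fin.ext
            simp [Fin.add_def, Fin.last, Fin.castSucc, Fin.castAdd, Fin.castLE]
          have h3 : (Fin.last (M+1) + 1 : Fin (M+2)) = 0 := by
            apply Fin.ext
            simp [Fin.add_def, Fin.last]
          simp only [hxx, hyy, h1, h2, h3]
          calc ‖x' (Fin.last M).castSucc - y' 0‖
              ≤ ‖x' (Fin.last M).castSucc - y' (Fin.last (M+1))‖ + ‖y' (Fin.last (M+1)) - y' 0‖ :=
                norm_sub_le_norm_sub_add_norm_sub _ _ _
            _ = ‖x' (Fin.last M).castSucc - y' (Fin.last (M+1))‖ + ‖x' (Fin.last (M+1)) - y' 0‖ := by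
                rw [hlast]
        · simp only [if_neg hi, add_zero, hxx, hyy, fin_castSucc_add_one i hi]
          exact le_rfl
      calc ∑ i, ‖xx i - yy (i+1)‖
          ≤ ∑ i : Fin (M+1), (‖x' i.castSucc - y' (i.castSucc + 1)‖ +
            (if i = Fin.last M then ‖x' (Fin.last (M+1)) - y' (Fin.last (M+1) + 1)‖ else 0)) :=
            Finset.sum_le_sum fun i _ => hstep i
        _ = ∑ i : Fin (M+1), ‖x' i.castSucc - y' (i.castSucc + 1)‖ +
            ‖x' (Fin.last (M+1)) - y' (Fin.last (M+1) + 1)‖ := by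
            rw [Finset.sum_add_distrib, Finset.sum_ite_eq' Finset.univ (Fin.last M)]
            simp

/-- A point of the support of `π + α_Δ` is either in the support of `π` or on the
diagonal. -/
lemma measSupport_add_diag {d : ℕ}
    (α : Measure (EuclideanSpace ℝ (Fin d)))
    (π : Measure (EuclideanSpace ℝ (Fin d) × EuclideanSpace ℝ (Fin d)))
    {z : EuclideanSpace ℝ (Fin d) × EuclideanSpace ℝ (Fin d)}
    (hz : z ∈ measSupport (π + α.map (fun x => (x, x)))) :
    z ∈ measSupport π ∨ z.1 = z.2 := by
  by_cases hdiag : z.1 = z.2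
  · exact Or.inr hdiag
  · left
    intro U hU hzU
    have hδ : Measurable (fun x : EuclideanSpace ℝ (Fin d) => (x, x)) :=
      measurable_id.prodMk measurable_id
    set V : Set (EuclideanSpace ℝ (Fin d) × EuclideanSpace ℝ (Fin d)) :=
      U ∩ {p | p.1 = p.2}ᶜ with hV
    have hVopen : IsOpen V := hU.inter (isClosed_diagonal.isOpen_compl)
    have hzV : z ∈ V := ⟨hzU, hdiag⟩
    have hVsum : (π + α.map (fun x => (x, x))) V ≠ 0 := hz V hVopen hzV
    have hpre : (fun x : EuclideanSpace ℝ (Fin d) => (x, x)) ⁻¹' V = ∅ := by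
      ext x
      simp [hV, Set.diagonal]
    have hmapV : (α.map (fun x => (x, x))) V = 0 := by
      rw [Measure.map_apply hδ hVopen.measurableSet, hpre, measure_empty]
    have hπV : π V ≠ 0 := by
      intro h0
      apply hVsum
      simp [Measure.add_apply, h0, hmapV]
    intro hπU
    exact hπV (le_antisymm (hπU ▸ measure_mono (Set.inter_subset_left)) zero_le)

/-- If `π` is a cyclically monotone coupling of `μ` and `ν`, and
`α_Δ` is the push-forward of `α` under `x ↦ (x, x)`, then `π + α_Δ` is a coupling of
`μ + α` and `ν + α` that is again cyclically monotone. -/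
theorem cyclMonotone_add_diagonal
    {d : ℕ} (μ ν α : Measure (EuclideanSpace ℝ (Fin d)))
    [IsFiniteMeasure μ] [IsFiniteMeasure ν] [IsFiniteMeasure α]
    (hmass : μ Set.univ = ν Set.univ)
    (π : Measure (EuclideanSpace ℝ (Fin d) × EuclideanSpace ℝ (Fin d)))
    (hπ1 : π.map Prod.fst = μ) (hπ2 : π.map Prod.snd = ν)
    (hcm : CyclMonotone π) :
    (π + α.map (fun x => (x, x))).map Prod.fst = μ + α ∧
    (π + α.map (fun x => (x, x))).map Prod.snd = ν + α ∧
    CyclMonotone (π + α.map (fun x => (x, x))) := by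
  have hδ : Measurable (fun x : EuclideanSpace ℝ (Fin d) => (x, x)) :=
    measurable_id.prodMk measurable_id
  refine ⟨?_, ?_, ?_⟩
  · rw [Measure.map_add _ _ measurable_fst, hπ1,
      Measure.map_map measurable_fst hδ]
    have : (Prod.fst ∘ fun x : EuclideanSpace ℝ (Fin d) => (x, x)) = id := rfl
    rw [show (Prod.fst ∘ fun x : EuclideanSpace ℝ (Fin d) => (x, x)) = id from rfl, Measure.map_id]
  · rw [Measure.map_add _ _ measurable_snd, hπ2,
      Measure.map_map measurable_snd hδ]
    have : (Prod.snd ∘ fun x : EuclideanSpace ℝ (Fin d) => (x, x)) = id := rfl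
    rw [show (Prod.snd ∘ fun x : EuclideanSpace ℝ (Fin d) => (x, x)) = id from rfl, Measure.map_id]
  · intro N x y h
    have hmon : ∀ z, z ∈ measSupport π → z ∈ measSupport π := fun z hz => hz
    refine key (measSupport π) (fun N x y hx => hcm N x y hx) N x y fun i => ?_
    exact measSupport_add_diag α π (h i)
end
end

section
/- On ℝ (i.e. d = 1), let μ = δ_0, ν = δ_1 and α = b · Leb|_{[0,1]} for b ≥ 1, and let p ≥ 1. Then W_p(α + μ, α + ν)^p = b^{−p} ( b − 1 + 2/(p+1) ). In particular, W_p(α + μ, α + ν) → 0 as b → ∞ for every p > 1, so that the identity W_1(α+μ, α+ν) = W_1(μ,ν) fails for every p > 1. -/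
open MeasureTheory ENNReal Filter

noncomputable section

/-- The Wasserstein distance of order `p` between finite measures of equal total mass
on `ℝ`: the `p`-th root of the infimum of `∫ |x - y|^p dπ` over all couplings `π`. -/
def Wp (p : ℝ) (μ ν : Measure ℝ) : ℝ≥0∞ :=
  (⨅ (π : Measure (ℝ × ℝ)) (_ : π.map Prod.fst = μ) (_ : π.map Prod.snd = ν),
    ∫⁻ z, ENNReal.ofReal (|z.1 - z.2| ^ p) ∂π) ^ (1 / p)


lemma tangent {p : ℝ} (hp : 1 ≤ p) {s t : ℝ} (hs : 0 ≤ s) (ht : 0 ≤ t) :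
    s ^ p + p * s ^ (p - 1) * (t - s) ≤ t ^ p := by
  rcases eq_or_lt_of_le hs with rfl | hs'
  · rcases eq_or_lt_of_le hp with rfl | hp'
    · simp [Real.rpow_zero, Real.rpow_one]
    · rw [Real.zero_rpow (by linarith), Real.zero_rpow (by linarith)]
      simpa using Real.rpow_nonneg ht p
  · have hz : -1 ≤ t / s - 1 := by
      have : 0 ≤ t / s := div_nonneg ht hs'.le
      linarith
    have hb := one_add_mul_self_le_rpow_one_add hz hp
    have h1 : (1 : ℝ) + (t / s - 1) = t / s := by ring
    rw [h1] at hb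
    rw [Real.div_rpow ht hs'.le] at hb
    have hsp : (0:ℝ) < s ^ p := Real.rpow_pos_of_pos hs' p
    have hb' : (1 + p * (t / s - 1)) * s ^ p ≤ t ^ p := (le_div_iff₀ hsp).mp hb
    calc s ^ p + p * s ^ (p - 1) * (t - s) = (1 + p * (t / s - 1)) * s ^ p := by
          have e1 : s ^ (p - 1) = s ^ p / s := by
            rw [Real.rpow_sub hs', Real.rpow_one]
          rw [e1]; field_simp
      _ ≤ t ^ p := hb'

lemma chord {p h y : ℝ} (hp : 1 ≤ p) (hy : 0 ≤ y) (hh : y ≤ h) : y ^ p ≤ h ^ (p - 1) * y := by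
  rcases eq_or_lt_of_le hy with rfl | hy'
  · simp [Real.zero_rpow (by linarith : p ≠ 0)]
  · have e1 : y ^ p = y ^ (p - 1) * y := by
      rw [← Real.rpow_add_one hy'.ne' (p - 1), sub_add_cancel]
    rw [e1]
    have : y ^ (p-1) ≤ h ^ (p-1) := Real.rpow_le_rpow hy hh (by linarith)
    nlinarith

lemma fourpoint {p c y u d : ℝ} (hp : 1 ≤ p) (hc : 0 ≤ c) (h1 : c ≤ y) (h2 : y ≤ u) (h3 : u ≤ d)
    (hsum : c + d = y + u) : y ^ p + u ^ p ≤ c ^ p + d ^ p := by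
  have t1 := tangent hp (hc.trans h1) hc
  have t2 := tangent hp (hc.trans (h1.trans h2)) (hc.trans (h1.trans (h2.trans h3)))
  have hm : y ^ (p-1) ≤ u ^ (p-1) := Real.rpow_le_rpow (hc.trans h1) h2 (by linarith)
  have key := mul_le_mul_of_nonneg_left hm
    (show (0:ℝ) ≤ p * (d - u) by nlinarith)
  rw [show c - y = -(d-u) by linarith] at t1
  nlinarith [t1, t2, key]

/-- Kantorovich potentials. -/
def phiF (p h : ℝ) : ℝ → ℝ := fun x =>
  if x ≤ 1 - h then (h^p + p*h^(p-1)*(1-h)) - p*h^(p-1)*x else |1-x|^p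

def psiF (p h : ℝ) : ℝ → ℝ := fun y =>
  if y < h then |y|^p else (h^p + p*h^(p-1)*(1-h)) - p*h^(p-1)*(1-y)

lemma constraint {p h x y : ℝ} (hp : 1 ≤ p) (h0 : 0 < h) (h1 : h ≤ 1)
    (hx0 : 0 ≤ x) (hx1 : x ≤ 1) (hy0 : 0 ≤ y) (hy1 : y ≤ 1) :
    phiF p h x + psiF p h y ≤ |x - y|^p + (h^p + p*h^(p-1)*(1-h)) := by
  have hB0 : (0:ℝ) ≤ h^(p-1) := Real.rpow_nonneg h0.le _
  have hhp : (0:ℝ) ≤ h^p := Real.rpow_nonneg h0.le _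
  have habsp : (0:ℝ) ≤ |x-y|^p := Real.rpow_nonneg (abs_nonneg _) _
  unfold phiF psiF
  rw [show |y| = y from abs_of_nonneg hy0, show |1-x| = 1-x from abs_of_nonneg (by linarith)]
  split_ifs with hxa hyh hyh
  · -- Case A : x ≤ 1-h, y < h
    rcases le_or_gt y x with hxy | hxy
    · have c1 : y ^ p ≤ h^(p-1) * y := chord hp hy0 hyh.le
      nlinarith [mul_nonneg hB0 hx0, mul_nonneg hB0 (sub_nonneg.2 hxy)]
    · have habs : |x - y| = y - x := by rw [abs_of_neg (by linarith)]; ring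
      have t := tangent hp hy0 (show 0 ≤ y - x by linarith)
      have hm : y^(p-1) ≤ h^(p-1) := Real.rpow_le_rpow hy0 hyh.le (by linarith)
      rw [habs]
      nlinarith [mul_le_mul_of_nonneg_left hm (show (0:ℝ) ≤ p*x by nlinarith)]
  · -- Case B : x ≤ 1-h, h ≤ y
    have t := tangent hp h0.le (abs_nonneg (x - y))
    have habs : y - x ≤ |x - y| := by rw [abs_sub_comm]; exact le_abs_self _
    nlinarith [mul_le_mul_of_nonneg_left habs (show (0:ℝ) ≤ p * h^(p-1) by positivity)]
  · -- Case C : 1-h < x, y < h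
    obtain ⟨u, rfl⟩ : ∃ u, x = 1 - u := ⟨1-x, by ring⟩
    have hu0 : 0 ≤ u := by linarith
    have huh : u < h := by push_neg at hxa; linarith
    rw [show (1:ℝ) - (1-u) = u from by ring]
    rcases le_or_gt (u + y) h with hw | hw
    · -- w ≤ h
      have habs : |(1-u) - y| = 1 - u - y := abs_of_nonneg (by linarith)
      have s1 : u^p + y^p ≤ (u+y)^p := by
        rcases le_total u y with hle | hle
        · have := fourpoint (c:=0) (d:=u+y) hp le_rfl hu0 hle (by linarith) (by ring)
          rw [Real.zero_rpow (by linarith : p ≠ 0)] at this; linarith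
        · have := fourpoint (c:=0) (d:=u+y) hp le_rfl hy0 hle (by linarith) (by ring)
          rw [Real.zero_rpow (by linarith : p ≠ 0)] at this; linarith
      have s2 : (u+y)^p ≤ h^p := Real.rpow_le_rpow (by linarith) hw (by linarith)
      rw [habs]
      nlinarith [Real.rpow_nonneg (show (0:ℝ) ≤ 1-u-y by linarith) p,
        mul_nonneg (mul_nonneg (by linarith : (0:ℝ) ≤ p) hB0) (by linarith : (0:ℝ) ≤ 1-h)]
    · -- h < w
      have s1 : u^p + y^p ≤ (u+y-h)^p + h^p := by
        rcases le_total u y with hle | hle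
        · have := fourpoint hp (by linarith : (0:ℝ) ≤ u+y-h) (by linarith : u+y-h ≤ u) hle
            (le_of_lt hyh) (by ring)
          linarith
        · have := fourpoint hp (by linarith : (0:ℝ) ≤ u+y-h) (by linarith : u+y-h ≤ y) hle
            (le_of_lt huh) (by ring)
          linarith
      rcases le_or_gt (u + y) 1 with hw1 | hw1
      · have habs : |(1-u) - y| = 1 - u - y := abs_of_nonneg (by linarith)
        rw [habs]
        rcases le_or_gt (u+y-h) (1-u-y) with hc | hc
        · have s3 : (u+y-h)^p ≤ (1-u-y)^p := Real.rpow_le_rpow (by linarith) hc (by linarith)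
          nlinarith [mul_nonneg (mul_nonneg (by linarith : (0:ℝ) ≤ p) hB0) (by linarith : (0:ℝ) ≤ 1-h)]
        · have t := tangent hp (show (0:ℝ) ≤ u+y-h by linarith) (show (0:ℝ) ≤ 1-u-y by linarith)
          have hm : (u+y-h)^(p-1) ≤ h^(p-1) := Real.rpow_le_rpow (by linarith) (by linarith) (by linarith)
          have key : p * ((u+y-h)^(p-1) * ((u+y-h)-(1-u-y))) ≤ p * (h^(p-1) * (1-h)) := by
            apply mul_le_mul_of_nonneg_left _ (by linarith : (0:ℝ) ≤ p)
            exact mul_le_mul hm (by linarith) (by linarith) hB0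
          nlinarith [t, key]
      · have habs : |(1-u) - y| = u + y - 1 := by rw [abs_of_neg (by linarith)]; ring
        rw [habs]
        have t := tangent hp (show (0:ℝ) ≤ u+y-h by linarith) (show (0:ℝ) ≤ u+y-1 by linarith)
        have hm : (u+y-h)^(p-1) ≤ h^(p-1) := Real.rpow_le_rpow (by linarith) (by linarith) (by linarith)
        have key : p * ((u+y-h)^(p-1) * (1-h)) ≤ p * (h^(p-1) * (1-h)) := by
          apply mul_le_mul_of_nonneg_left _ (by linarith : (0:ℝ) ≤ p)
          exact mul_le_mul_of_nonneg_right hm (by linarith)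
        nlinarith [t, key]
  · -- Case D : 1-h < x, h ≤ y
    obtain ⟨u, rfl⟩ : ∃ u, x = 1 - u := ⟨1-x, by ring⟩
    have hu0 : 0 ≤ u := by linarith
    have huh : u < h := by push_neg at hxa; linarith
    push_neg at hyh
    rw [show (1:ℝ) - (1-u) = u from by ring]
    rcases le_or_gt u (1-y) with hle | hle
    · have c1 : u ^ p ≤ h^(p-1) * u := chord hp hu0 huh.le
      nlinarith [mul_le_mul_of_nonneg_left hle hB0, mul_nonneg (mul_nonneg (by linarith : (0:ℝ) ≤ p-1) hB0) (by linarith : (0:ℝ) ≤ 1-y)]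
    · have habs : |(1-u) - y| = u - (1-y) := by rw [abs_of_neg (by linarith)]; ring
      have t := tangent hp hu0 (show (0:ℝ) ≤ u - (1-y) by linarith)
      have hm : u^(p-1) ≤ h^(p-1) := Real.rpow_le_rpow hu0 huh.le (by linarith)
      rw [habs]
      nlinarith [mul_le_mul_of_nonneg_left hm (show (0:ℝ) ≤ p*(1-y) by nlinarith)]

open MeasureTheory ENNReal Filter Set

section helpers
variable {p h : ℝ}

lemma phiF_nonneg (hp : 1 ≤ p) (h0 : 0 < h) (h1 : h ≤ 1) (x : ℝ) : 0 ≤ phiF p h x := by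
  unfold phiF; split_ifs with hx
  · have hB0 : (0:ℝ) ≤ h^(p-1) := Real.rpow_nonneg h0.le _
    have hhp : (0:ℝ) ≤ h^p := Real.rpow_nonneg h0.le _
    nlinarith [mul_nonneg (mul_nonneg (by linarith : (0:ℝ) ≤ p) hB0) (by linarith : (0:ℝ) ≤ 1-h-x)]
  · exact Real.rpow_nonneg (abs_nonneg _) _

lemma psiF_nonneg (hp : 1 ≤ p) (h0 : 0 < h) (h1 : h ≤ 1) (y : ℝ) : 0 ≤ psiF p h y := by
  unfold psiF; split_ifs with hy
  · exact Real.rpow_nonneg (abs_nonneg _) _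
  · push_neg at hy
    have hB0 : (0:ℝ) ≤ h^(p-1) := Real.rpow_nonneg h0.le _
    have hhp : (0:ℝ) ≤ h^p := Real.rpow_nonneg h0.le _
    nlinarith [mul_nonneg (mul_nonneg (by linarith : (0:ℝ) ≤ p) hB0) (by linarith : (0:ℝ) ≤ y-h)]

lemma phiF_meas (hp : 1 ≤ p) : Measurable (phiF p h) := by
  unfold phiF
  exact Measurable.ite (measurableSet_le measurable_id measurable_const)
    (measurable_const.sub (measurable_const.mul measurable_id))
    (((Real.continuous_rpow_const (by linarith)).comp
      (continuous_const.sub continuous_id).abs).measurable)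

lemma psiF_meas (hp : 1 ≤ p) : Measurable (psiF p h) := by
  unfold psiF
  exact Measurable.ite (measurableSet_lt measurable_id measurable_const)
    (((Real.continuous_rpow_const (by linarith)).comp continuous_abs).measurable)
    (measurable_const.sub (measurable_const.mul (measurable_const.sub measurable_id)))

lemma lint_ofReal {a b' : ℝ} (hab : a ≤ b') {f : ℝ → ℝ} (hf : ContinuousOn f (Set.Icc a b'))
    (hf0 : ∀ t ∈ Set.Ioc a b', 0 ≤ f t) :
    ∫⁻ t in Set.Ioc a b', ENNReal.ofReal (f t) = ENNReal.ofReal (∫ t in a..b', f t) := by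
  rw [← MeasureTheory.ofReal_integral_eq_lintegral_ofReal, intervalIntegral.integral_of_le hab]
  · exact (ContinuousOn.intervalIntegrable (by rwa [Set.uIcc_of_le hab])).1
  · filter_upwards [ae_restrict_mem measurableSet_Ioc] with t ht using hf0 t ht

lemma Eaff (A B' a b' : ℝ) : ∫ x in a..b', (A + B'*x) = A*(b'-a) + B'*(b'^2-a^2)/2 := by
  rw [intervalIntegral.integral_add intervalIntegrable_const
    ((by fun_prop : Continuous fun x : ℝ => B' * x).intervalIntegrable _ _), intervalIntegral.integral_const,
    intervalIntegral.integral_const_mul, integral_id]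
  simp [smul_eq_mul]; ring

lemma E1 {c : ℝ} (hp : 1 ≤ p) (hc : 0 ≤ c) : ∫ t in (0:ℝ)..c, t ^ p = c^(p+1)/(p+1) := by
  rw [integral_rpow (Or.inl (by linarith)), Real.zero_rpow (by linarith : p+1 ≠ 0)]
  ring

lemma lintU1 (hp : 1 ≤ p) (h0 : 0 < h) :
    ∫⁻ t in Set.Ioc (0:ℝ) h, ENNReal.ofReal (|(0:ℝ) - t| ^ p) = ENNReal.ofReal (h^(p+1)/(p+1)) := by
  rw [setLIntegral_congr_fun_ae measurableSet_Ioc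
    (ae_of_all _ (fun t (ht : t ∈ Set.Ioc (0:ℝ) h) => by
      rw [show |(0:ℝ) - t| = t from by rw [abs_of_nonpos (by linarith [ht.1])]; ring]))]
  rw [lint_ofReal (f := fun t => t ^ p) h0.le ((Real.continuous_rpow_const (by linarith)).continuousOn)
    (fun t ht => Real.rpow_nonneg ht.1.le p), E1 hp h0.le]

lemma lintU3 (hp : 1 ≤ p) (h0 : 0 < h) (h1 : h ≤ 1) :
    ∫⁻ t in Set.Ioc (1-h) (1:ℝ), ENNReal.ofReal (|t - 1| ^ p) = ENNReal.ofReal (h^(p+1)/(p+1)) := by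
  rw [setLIntegral_congr_fun_ae measurableSet_Ioc
    (ae_of_all _ (fun t (ht : t ∈ Set.Ioc (1-h) (1:ℝ)) => by
      rw [show |t - 1| = 1 - t from by rw [abs_of_nonpos (by linarith [ht.2])]; ring]))]
  rw [lint_ofReal (f := fun t => (1-t) ^ p) (by linarith)
    (((Real.continuous_rpow_const (by linarith)).comp (continuous_const.sub continuous_id)).continuousOn)
    (fun t ht => Real.rpow_nonneg (by linarith [ht.2]) p)]
  congr 1
  have hco := intervalIntegral.integral_comp_sub_left (a := 1-h) (b := 1) (fun s : ℝ => s ^ p) 1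
  norm_num at hco
  rw [hco, E1 hp h0.le]

lemma map_shift (a b' c : ℝ) :
    (volume.restrict (Set.Ioc a b')).map (fun t => t + c)
      = volume.restrict (Set.Ioc (a+c) (b'+c)) := by
  ext s hs
  rw [Measure.map_apply (measurable_add_const c) hs, Measure.restrict_apply hs,
    Measure.restrict_apply (hs.preimage (measurable_add_const c))]
  have e : (fun t => t + c) ⁻¹' s ∩ Set.Ioc a b' = (fun t => t + c) ⁻¹' (s ∩ Set.Ioc (a+c) (b'+c)) := by
    rw [Set.preimage_inter]
    congr 1
    ext t
    simp only [Set.mem_preimage, Set.mem_Ioc]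
    constructor <;> rintro ⟨h1, h2⟩ <;> constructor <;> linarith
  rw [e, (measurePreserving_add_right volume c).measure_preimage
    (hs.inter measurableSet_Ioc).nullMeasurableSet]

section coupling
variable (p b h : ℝ)

def couplingPi (b h : ℝ) : Measure (ℝ × ℝ) :=
  ((ENNReal.ofReal b • volume.restrict (Set.Ioc (0:ℝ) h)).map (fun t => ((0:ℝ), t)))
  + ((ENNReal.ofReal b • volume.restrict (Set.Ioc (0:ℝ) (1-h))).map (fun t => (t, t+h)))
  + ((ENNReal.ofReal b • volume.restrict (Set.Ioc (1-h) (1:ℝ))).map (fun t => (t, (1:ℝ))))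

variable {b h}

lemma hb_facts (hb : 1 ≤ b) (hh : h = b⁻¹) :
    0 < b ∧ 0 < h ∧ h ≤ 1 ∧ b * h = 1 := by
  have hb0 : 0 < b := by linarith
  refine ⟨hb0, by simp [hh]; positivity, ?_, by rw [hh]; exact mul_inv_cancel₀ hb0.ne'⟩
  rw [hh]
  exact inv_le_one_of_one_le₀ hb

lemma mass_one (hb : 1 ≤ b) (hh : h = b⁻¹) {a c : ℝ} (hac : c - a = h) :
    ENNReal.ofReal b * volume (Set.Ioc a c) = 1 := by
  obtain ⟨hb0, hh0, hh1, hbh⟩ := hb_facts hb hh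
  rw [Real.volume_Ioc, hac, ← ENNReal.ofReal_mul hb0.le, hbh, ENNReal.ofReal_one]

lemma couplingPi_fst (hb : 1 ≤ b) (hh : h = b⁻¹) :
    (couplingPi b h).map Prod.fst
      = ENNReal.ofReal b • volume.restrict (Set.Icc (0:ℝ) 1) + Measure.dirac 0 := by
  obtain ⟨hb0, hh0, hh1, hbh⟩ := hb_facts hb hh
  unfold couplingPi
  rw [Measure.map_add _ _ measurable_fst, Measure.map_add _ _ measurable_fst,
    Measure.map_map measurable_fst (f := fun t : ℝ => ((0:ℝ), t)) (by fun_prop),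
    Measure.map_map measurable_fst (f := fun t : ℝ => (t, t+h)) (by fun_prop),
    Measure.map_map measurable_fst (f := fun t : ℝ => (t, (1:ℝ))) (by fun_prop)]
  have e1 : (Prod.fst ∘ fun t : ℝ => ((0:ℝ), t)) = fun _ => (0:ℝ) := rfl
  have e2 : (Prod.fst ∘ fun t : ℝ => (t, t+h)) = id := rfl
  have e3 : (Prod.fst ∘ fun t : ℝ => (t, (1:ℝ))) = id := rfl
  rw [e1, e2, e3, Measure.map_id, Measure.map_id, Measure.map_const]
  rw [Measure.smul_apply, smul_eq_mul, Measure.restrict_apply_univ, mass_one hb hh (by ring),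
    one_smul]
  rw [add_assoc, ← smul_add, ← Measure.restrict_union ((Set.Ioc_disjoint_Ioc_of_le le_rfl)) measurableSet_Ioc,
    Set.Ioc_union_Ioc_eq_Ioc (by linarith) (by linarith),
    Measure.restrict_congr_set Ioc_ae_eq_Icc]
  exact add_comm _ _

lemma couplingPi_snd (hb : 1 ≤ b) (hh : h = b⁻¹) :
    (couplingPi b h).map Prod.snd
      = ENNReal.ofReal b • volume.restrict (Set.Icc (0:ℝ) 1) + Measure.dirac 1 := by
  obtain ⟨hb0, hh0, hh1, hbh⟩ := hb_facts hb hh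
  unfold couplingPi
  rw [Measure.map_add _ _ measurable_snd, Measure.map_add _ _ measurable_snd,
    Measure.map_map measurable_snd (f := fun t : ℝ => ((0:ℝ), t)) (by fun_prop),
    Measure.map_map measurable_snd (f := fun t : ℝ => (t, t+h)) (by fun_prop),
    Measure.map_map measurable_snd (f := fun t : ℝ => (t, (1:ℝ))) (by fun_prop)]
  have e1 : (Prod.snd ∘ fun t : ℝ => ((0:ℝ), t)) = id := rfl
  have e2 : (Prod.snd ∘ fun t : ℝ => (t, t+h)) = fun t => t + h := rfl
  have e3 : (Prod.snd ∘ fun t : ℝ => (t, (1:ℝ))) = fun _ => (1:ℝ) := rfl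
  rw [e1, e2, e3, Measure.map_id, Measure.map_const, Measure.map_smul, map_shift]
  rw [Measure.smul_apply, smul_eq_mul, Measure.restrict_apply_univ, mass_one hb hh (by ring),
    one_smul]
  rw [show (0:ℝ) + h = h from by ring, show (1:ℝ) - h + h = 1 from by ring]
  rw [← smul_add, ← Measure.restrict_union ((Set.Ioc_disjoint_Ioc_of_le le_rfl)) measurableSet_Ioc,
    Set.Ioc_union_Ioc_eq_Ioc (by linarith) (by linarith),
    Measure.restrict_congr_set Ioc_ae_eq_Icc]

end coupling

section cost
variable {p b h : ℝ}

lemma costFn_meas (hp : 1 ≤ p) :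
    Measurable fun z : ℝ × ℝ => ENNReal.ofReal (|z.1 - z.2| ^ p) :=
  (((Real.continuous_rpow_const (by linarith)).comp
    ((continuous_fst.sub continuous_snd).abs)).measurable).ennreal_ofReal

lemma lintU2 (hp : 1 ≤ p) (h0 : 0 < h) (h1 : h ≤ 1) :
    ∫⁻ t in Set.Ioc (0:ℝ) (1-h), ENNReal.ofReal (|t - (t+h)| ^ p)
      = ENNReal.ofReal (h^p * (1-h)) := by
  rw [setLIntegral_congr_fun_ae measurableSet_Ioc (ae_of_all _ (fun t (ht : t ∈ Set.Ioc (0:ℝ) (1-h)) => by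
    rw [show |t - (t+h)| = h from by rw [abs_of_nonpos (by linarith)]; ring]))]
  rw [setLIntegral_const, Real.volume_Ioc, sub_zero,
    ← ENNReal.ofReal_mul (Real.rpow_nonneg h0.le p)]

lemma couplingPi_cost (hp : 1 ≤ p) (hb : 1 ≤ b) (hh : h = b⁻¹) :
    ∫⁻ z, ENNReal.ofReal (|z.1 - z.2| ^ p) ∂(couplingPi b h)
      = ENNReal.ofReal (b ^ (-p) * (b - 1 + 2 / (p + 1))) := by
  obtain ⟨hb0, hh0, hh1, hbh⟩ := hb_facts hb hh
  unfold couplingPi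
  rw [lintegral_add_measure, lintegral_add_measure,
    lintegral_map (costFn_meas hp) (by fun_prop),
    lintegral_map (costFn_meas hp) (by fun_prop),
    lintegral_map (costFn_meas hp) (by fun_prop),
    lintegral_smul_measure, lintegral_smul_measure, lintegral_smul_measure]
  simp only [smul_eq_mul]
  rw [lintU1 hp hh0, lintU2 hp hh0 hh1, lintU3 hp hh0 hh1]
  rw [← ENNReal.ofReal_mul hb0.le, ← ENNReal.ofReal_mul hb0.le,
    ← ENNReal.ofReal_add (mul_nonneg hb0.le (div_nonneg (Real.rpow_nonneg hh0.le _) (by linarith)))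
      (mul_nonneg hb0.le (mul_nonneg (Real.rpow_nonneg hh0.le _) (by linarith))),
    ← ENNReal.ofReal_add (add_nonneg (mul_nonneg hb0.le (div_nonneg (Real.rpow_nonneg hh0.le _) (by linarith)))
      (mul_nonneg hb0.le (mul_nonneg (Real.rpow_nonneg hh0.le _) (by linarith))))
      (mul_nonneg hb0.le (div_nonneg (Real.rpow_nonneg hh0.le _) (by linarith)))]
  congr 1
  have hbp : b ^ (-p) = h ^ p := by rw [Real.rpow_neg hb0.le, hh, Real.inv_rpow hb0.le]
  have h1p : h^(p+1) = h^p * h := by rw [Real.rpow_add hh0, Real.rpow_one]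
  rw [hbp, h1p]
  linear_combination (h ^ p * (2/(p+1) - 1)) * hbh

lemma lphi1 (hp : 1 ≤ p) (h0 : 0 < h) (h1 : h ≤ 1) :
    ∫⁻ x in Set.Ioc (0:ℝ) (1-h), ENNReal.ofReal (phiF p h x)
      = ENNReal.ofReal ((h^p + p*h^(p-1)*(1-h))*((1-h)-0) + (-(p*h^(p-1)))*((1-h)^2-0^2)/2) := by
  have hB0 : (0:ℝ) ≤ h^(p-1) := Real.rpow_nonneg h0.le _
  have hhp : (0:ℝ) ≤ h^p := Real.rpow_nonneg h0.le _
  have e : ∀ x ∈ Set.Ioc (0:ℝ) (1-h), ENNReal.ofReal (phiF p h x)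
      = ENNReal.ofReal ((h^p + p*h^(p-1)*(1-h)) + (-(p*h^(p-1)))*x) := by
    intro x hx
    unfold phiF; rw [if_pos hx.2]; congr 1; ring
  have hnn : ∀ x ∈ Set.Ioc (0:ℝ) (1-h), 0 ≤ (h^p + p*h^(p-1)*(1-h)) + (-(p*h^(p-1)))*x := by
    intro x hx
    nlinarith [mul_nonneg (mul_nonneg (by linarith : (0:ℝ) ≤ p) hB0)
      (by linarith [hx.2] : (0:ℝ) ≤ 1-h-x)]
  rw [setLIntegral_congr_fun_ae (g := fun x => ENNReal.ofReal ((h^p + p*h^(p-1)*(1-h)) + (-(p*h^(p-1)))*x))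
    measurableSet_Ioc (ae_of_all _ e)]
  rw [lint_ofReal (f := fun x => (h^p + p*h^(p-1)*(1-h)) + (-(p*h^(p-1)))*x) (by linarith)
    (Continuous.continuousOn (by fun_prop)) hnn]
  rw [Eaff]

lemma lphi2 (hp : 1 ≤ p) (h0 : 0 < h) (h1 : h ≤ 1) :
    ∫⁻ x in Set.Ioc (1-h) (1:ℝ), ENNReal.ofReal (phiF p h x)
      = ENNReal.ofReal (h^(p+1)/(p+1)) := by
  rw [setLIntegral_congr_fun_ae measurableSet_Ioc (ae_of_all _ (fun x (hx : x ∈ Set.Ioc (1-h) (1:ℝ)) => by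
    unfold phiF; rw [if_neg (not_le.mpr hx.1), abs_of_nonneg (by linarith [hx.2])]))]
  rw [lint_ofReal (f := fun t => (1-t) ^ p) (by linarith)
    (((Real.continuous_rpow_const (by linarith)).comp (continuous_const.sub continuous_id)).continuousOn)
    (fun t ht => Real.rpow_nonneg (by linarith [ht.2]) p)]
  congr 1
  have hco := intervalIntegral.integral_comp_sub_left (a := 1-h) (b := 1) (fun s : ℝ => s ^ p) 1
  norm_num at hco
  rw [hco, E1 hp h0.le]

lemma lpsi1 (hp : 1 ≤ p) (h0 : 0 < h) (h1 : h ≤ 1) :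
    ∫⁻ y in Set.Ioc (0:ℝ) h, ENNReal.ofReal (psiF p h y)
      = ENNReal.ofReal (h^(p+1)/(p+1)) := by
  rw [setLIntegral_congr_fun_ae measurableSet_Ioc (ae_of_all _ (fun y (hy : y ∈ Set.Ioc (0:ℝ) h) => by
    unfold psiF
    rcases lt_or_eq_of_le hy.2 with hlt | heq
    · rw [if_pos hlt, abs_of_nonneg hy.1.le]
    · rw [if_neg (by rw [heq]; exact lt_irrefl _), heq]; ring))]
  rw [lint_ofReal (f := fun t => t ^ p) h0.le ((Real.continuous_rpow_const (by linarith)).continuousOn)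
    (fun t ht => Real.rpow_nonneg ht.1.le p), E1 hp h0.le]

lemma lpsi2 (hp : 1 ≤ p) (h0 : 0 < h) (h1 : h ≤ 1) :
    ∫⁻ y in Set.Ioc h (1:ℝ), ENNReal.ofReal (psiF p h y)
      = ENNReal.ofReal (((h^p + p*h^(p-1)*(1-h)) - p*h^(p-1))*(1-h) + (p*h^(p-1))*(1^2-h^2)/2) := by
  have hB0 : (0:ℝ) ≤ h^(p-1) := Real.rpow_nonneg h0.le _
  have hhp : (0:ℝ) ≤ h^p := Real.rpow_nonneg h0.le _
  have e : ∀ y ∈ Set.Ioc h (1:ℝ), ENNReal.ofReal (psiF p h y)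
      = ENNReal.ofReal (((h^p + p*h^(p-1)*(1-h)) - p*h^(p-1)) + (p*h^(p-1))*y) := by
    intro y hy
    unfold psiF; rw [if_neg (not_lt.mpr hy.1.le)]; congr 1; ring
  have hnn : ∀ y ∈ Set.Ioc h (1:ℝ), 0 ≤ ((h^p + p*h^(p-1)*(1-h)) - p*h^(p-1)) + (p*h^(p-1))*y := by
    intro y hy
    nlinarith [mul_nonneg (mul_nonneg (by linarith : (0:ℝ) ≤ p) hB0)
      (by linarith [hy.1] : (0:ℝ) ≤ y-h)]
  rw [setLIntegral_congr_fun_ae (g := fun y => ENNReal.ofReal (((h^p + p*h^(p-1)*(1-h)) - p*h^(p-1)) + (p*h^(p-1))*y))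
    measurableSet_Ioc (ae_of_all _ e)]
  rw [lint_ofReal (f := fun y => ((h^p + p*h^(p-1)*(1-h)) - p*h^(p-1)) + (p*h^(p-1))*y) h1
    (Continuous.continuousOn (by fun_prop)) hnn]
  rw [Eaff]

end cost

section lower
variable {p b h : ℝ}

lemma lint_phi_full (hp : 1 ≤ p) (hb : 1 ≤ b) (hh : h = b⁻¹) :
    ∫⁻ x, ENNReal.ofReal (phiF p h x)
        ∂(ENNReal.ofReal b • volume.restrict (Set.Icc (0:ℝ) 1) + Measure.dirac 0)
      = ENNReal.ofReal (b * (((h^p + p*h^(p-1)*(1-h))*((1-h)-0) + (-(p*h^(p-1)))*((1-h)^2-0^2)/2)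
          + h^(p+1)/(p+1)) + (h^p + p*h^(p-1)*(1-h))) := by
  obtain ⟨hb0, hh0, hh1, hbh⟩ := hb_facts hb hh
  have hB0 : (0:ℝ) ≤ h^(p-1) := Real.rpow_nonneg hh0.le _
  have hhp : (0:ℝ) ≤ h^p := Real.rpow_nonneg hh0.le _
  have hC0 : (0:ℝ) ≤ h^p + p*h^(p-1)*(1-h) := by
    nlinarith [mul_nonneg (mul_nonneg (by linarith : (0:ℝ) ≤ p) hB0) (by linarith : (0:ℝ) ≤ 1-h)]
  have nn1 : (0:ℝ) ≤ (h^p + p*h^(p-1)*(1-h))*((1-h)-0) + (-(p*h^(p-1)))*((1-h)^2-0^2)/2 := by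
    nlinarith [mul_nonneg (mul_nonneg (by linarith : (0:ℝ) ≤ p) hB0) (sq_nonneg (1-h)),
      mul_nonneg hhp (by linarith : (0:ℝ) ≤ 1-h)]
  have nn2 : (0:ℝ) ≤ h^(p+1)/(p+1) := div_nonneg (Real.rpow_nonneg hh0.le _) (by linarith)
  have hphi0 : phiF p h 0 = h^p + p*h^(p-1)*(1-h) := by
    unfold phiF; rw [if_pos (by linarith : (0:ℝ) ≤ 1-h)]; ring
  rw [lintegral_add_measure, lintegral_smul_measure, smul_eq_mul,
    lintegral_dirac' _ ((phiF_meas hp).ennreal_ofReal), hphi0,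
    setLIntegral_congr (Ioc_ae_eq_Icc (a := (0:ℝ)) (b := (1:ℝ))).symm,
    ← Set.Ioc_union_Ioc_eq_Ioc (show (0:ℝ) ≤ 1-h by linarith) (show 1-h ≤ (1:ℝ) by linarith),
    lintegral_union measurableSet_Ioc (Set.Ioc_disjoint_Ioc_of_le le_rfl),
    lphi1 hp hh0 hh1, lphi2 hp hh0 hh1,
    ← ENNReal.ofReal_add nn1 nn2, ← ENNReal.ofReal_mul hb0.le,
    ← ENNReal.ofReal_add (mul_nonneg hb0.le (add_nonneg nn1 nn2)) hC0]

lemma lint_psi_full (hp : 1 ≤ p) (hb : 1 ≤ b) (hh : h = b⁻¹) :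
    ∫⁻ y, ENNReal.ofReal (psiF p h y)
        ∂(ENNReal.ofReal b • volume.restrict (Set.Icc (0:ℝ) 1) + Measure.dirac 1)
      = ENNReal.ofReal (b * (h^(p+1)/(p+1)
          + (((h^p + p*h^(p-1)*(1-h)) - p*h^(p-1))*(1-h) + (p*h^(p-1))*(1^2-h^2)/2))
          + (h^p + p*h^(p-1)*(1-h))) := by
  obtain ⟨hb0, hh0, hh1, hbh⟩ := hb_facts hb hh
  have hB0 : (0:ℝ) ≤ h^(p-1) := Real.rpow_nonneg hh0.le _
  have hhp : (0:ℝ) ≤ h^p := Real.rpow_nonneg hh0.le _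
  have hC0 : (0:ℝ) ≤ h^p + p*h^(p-1)*(1-h) := by
    nlinarith [mul_nonneg (mul_nonneg (by linarith : (0:ℝ) ≤ p) hB0) (by linarith : (0:ℝ) ≤ 1-h)]
  have nn1 : (0:ℝ) ≤ ((h^p + p*h^(p-1)*(1-h)) - p*h^(p-1))*(1-h) + (p*h^(p-1))*(1^2-h^2)/2 := by
    nlinarith [mul_nonneg (mul_nonneg (by linarith : (0:ℝ) ≤ p) hB0) (sq_nonneg (1-h)),
      mul_nonneg hhp (by linarith : (0:ℝ) ≤ 1-h)]
  have nn2 : (0:ℝ) ≤ h^(p+1)/(p+1) := div_nonneg (Real.rpow_nonneg hh0.le _) (by linarith)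
  have hpsi1 : psiF p h 1 = h^p + p*h^(p-1)*(1-h) := by
    unfold psiF; rw [if_neg (not_lt.mpr hh1)]; ring
  rw [lintegral_add_measure, lintegral_smul_measure, smul_eq_mul,
    lintegral_dirac' _ ((psiF_meas hp).ennreal_ofReal), hpsi1,
    setLIntegral_congr (Ioc_ae_eq_Icc (a := (0:ℝ)) (b := (1:ℝ))).symm,
    ← Set.Ioc_union_Ioc_eq_Ioc hh0.le hh1,
    lintegral_union measurableSet_Ioc (Set.Ioc_disjoint_Ioc_of_le le_rfl),
    lpsi1 hp hh0 hh1, lpsi2 hp hh0 hh1,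
    ← ENNReal.ofReal_add nn2 nn1, ← ENNReal.ofReal_mul hb0.le,
    ← ENNReal.ofReal_add (mul_nonneg hb0.le (add_nonneg nn2 nn1)) hC0]

lemma grand_real (hp : 1 ≤ p) (hb : 1 ≤ b) (hh : h = b⁻¹) :
    (b * (((h^p + p*h^(p-1)*(1-h))*((1-h)-0) + (-(p*h^(p-1)))*((1-h)^2-0^2)/2)
          + h^(p+1)/(p+1)) + (h^p + p*h^(p-1)*(1-h)))
    + (b * (h^(p+1)/(p+1)
          + (((h^p + p*h^(p-1)*(1-h)) - p*h^(p-1))*(1-h) + (p*h^(p-1))*(1^2-h^2)/2))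
          + (h^p + p*h^(p-1)*(1-h)))
    = b^(-p)*(b-1+2/(p+1)) + (h^p + p*h^(p-1)*(1-h))*(b+1) := by
  obtain ⟨hb0, hh0, hh1, hbh⟩ := hb_facts hb hh
  have hbp : b ^ (-p) = h ^ p := by rw [Real.rpow_neg hb0.le, hh, Real.inv_rpow hb0.le]
  have h1p : h^(p+1) = h^p * h := by rw [Real.rpow_add hh0, Real.rpow_one]
  have hpm : h^p = h^(p-1) * h := by
    rw [← Real.rpow_add_one hh0.ne' (p-1), sub_add_cancel]
  have hb' : b = h⁻¹ := by rw [hh, inv_inv]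
  rw [hbp, h1p, hpm, hb']
  field_simp
  ring

end lower

section lb
variable {p b h : ℝ}

lemma cost_lower (hp : 1 ≤ p) (hb : 1 ≤ b) (hh : h = b⁻¹) (P : Measure (ℝ × ℝ))
    (h1 : P.map Prod.fst = ENNReal.ofReal b • volume.restrict (Set.Icc (0:ℝ) 1) + Measure.dirac 0)
    (h2 : P.map Prod.snd = ENNReal.ofReal b • volume.restrict (Set.Icc (0:ℝ) 1) + Measure.dirac 1) :
    ENNReal.ofReal (b ^ (-p) * (b - 1 + 2 / (p + 1)))
      ≤ ∫⁻ z, ENNReal.ofReal (|z.1 - z.2| ^ p) ∂P := by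
  obtain ⟨hb0, hh0, hh1, hbh⟩ := hb_facts hb hh
  have hB0 : (0:ℝ) ≤ h^(p-1) := Real.rpow_nonneg hh0.le _
  have hhp : (0:ℝ) ≤ h^p := Real.rpow_nonneg hh0.le _
  have hC0 : (0:ℝ) ≤ h^p + p*h^(p-1)*(1-h) := by
    nlinarith [mul_nonneg (mul_nonneg (by linarith : (0:ℝ) ≤ p) hB0) (by linarith : (0:ℝ) ≤ 1-h)]
  have hT0 : (0:ℝ) ≤ b^(-p)*(b-1+2/(p+1)) := by
    exact mul_nonneg (Real.rpow_nonneg hb0.le _)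
      (add_nonneg (by linarith) (le_of_lt (div_pos two_pos (by linarith))))
  have hPu : P Set.univ = ENNReal.ofReal b + 1 := by
    have h3 : P.map Prod.fst Set.univ = P Set.univ := by
      rw [Measure.map_apply measurable_fst MeasurableSet.univ, Set.preimage_univ]
    rw [← h3, h1, Measure.add_apply, Measure.smul_apply, smul_eq_mul,
      Measure.restrict_apply_univ, Real.volume_Icc, measure_univ]
    norm_num
  have haefst : ∀ᵐ z ∂P, z.1 ∈ Set.Icc (0:ℝ) 1 := by
    rw [ae_iff]
    have e : {z : ℝ × ℝ | ¬ z.1 ∈ Set.Icc (0:ℝ) 1} = Prod.fst ⁻¹' (Set.Icc (0:ℝ) 1)ᶜ := rfl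
    rw [e, ← Measure.map_apply measurable_fst measurableSet_Icc.compl, h1, Measure.add_apply,
      Measure.smul_apply, smul_eq_mul, Measure.restrict_apply measurableSet_Icc.compl,
      Set.compl_inter_self, measure_empty, Measure.dirac_apply' _ measurableSet_Icc.compl]
    simp
  have haesnd : ∀ᵐ z ∂P, z.2 ∈ Set.Icc (0:ℝ) 1 := by
    rw [ae_iff]
    have e : {z : ℝ × ℝ | ¬ z.2 ∈ Set.Icc (0:ℝ) 1} = Prod.snd ⁻¹' (Set.Icc (0:ℝ) 1)ᶜ := rfl
    rw [e, ← Measure.map_apply measurable_snd measurableSet_Icc.compl, h2, Measure.add_apply,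
      Measure.smul_apply, smul_eq_mul, Measure.restrict_apply measurableSet_Icc.compl,
      Set.compl_inter_self, measure_empty, Measure.dirac_apply' _ measurableSet_Icc.compl]
    simp
  have hkey : ∀ᵐ z ∂P, ENNReal.ofReal (phiF p h z.1) + ENNReal.ofReal (psiF p h z.2)
      ≤ ENNReal.ofReal (|z.1 - z.2| ^ p) + ENNReal.ofReal (h^p + p*h^(p-1)*(1-h)) := by
    filter_upwards [haefst, haesnd] with z hz1 hz2
    rw [← ENNReal.ofReal_add (phiF_nonneg hp hh0 hh1 _) (psiF_nonneg hp hh0 hh1 _),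
      ← ENNReal.ofReal_add (Real.rpow_nonneg (abs_nonneg _) _) hC0]
    exact ENNReal.ofReal_le_ofReal (constraint hp hh0 hh1 hz1.1 hz1.2 hz2.1 hz2.2)
  have hstep : ∫⁻ z, (ENNReal.ofReal (phiF p h z.1) + ENNReal.ofReal (psiF p h z.2)) ∂P
      ≤ (∫⁻ z, ENNReal.ofReal (|z.1 - z.2| ^ p) ∂P)
        + ENNReal.ofReal (h^p + p*h^(p-1)*(1-h)) * P Set.univ := by
    calc ∫⁻ z, (ENNReal.ofReal (phiF p h z.1) + ENNReal.ofReal (psiF p h z.2)) ∂P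
        ≤ ∫⁻ z, (ENNReal.ofReal (|z.1 - z.2| ^ p)
            + ENNReal.ofReal (h^p + p*h^(p-1)*(1-h))) ∂P := lintegral_mono_ae hkey
      _ = _ := by rw [lintegral_add_right _ measurable_const, lintegral_const]
  have hsplit : ∫⁻ z, (ENNReal.ofReal (phiF p h z.1) + ENNReal.ofReal (psiF p h z.2)) ∂P
      = (∫⁻ x, ENNReal.ofReal (phiF p h x) ∂(P.map Prod.fst))
        + (∫⁻ y, ENNReal.ofReal (psiF p h y) ∂(P.map Prod.snd)) := by
    rw [lintegral_add_left (show Measurable fun z : ℝ × ℝ => ENNReal.ofReal (phiF p h z.1) from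
        ((phiF_meas hp).ennreal_ofReal).comp measurable_fst),
      ← lintegral_map ((phiF_meas hp).ennreal_ofReal) measurable_fst,
      ← lintegral_map ((psiF_meas hp).ennreal_ofReal) measurable_snd]
  rw [hsplit, h1, h2, lint_phi_full hp hb hh, lint_psi_full hp hb hh, hPu] at hstep
  have hKK : ENNReal.ofReal (h^p + p*h^(p-1)*(1-h)) * (ENNReal.ofReal b + 1)
      = ENNReal.ofReal ((h^p + p*h^(p-1)*(1-h)) * (b+1)) := by
    rw [ENNReal.ofReal_mul hC0, ENNReal.ofReal_add hb0.le zero_le_one, ENNReal.ofReal_one]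
  rw [hKK] at hstep
  have nn_phi : (0:ℝ) ≤ b * (((h^p + p*h^(p-1)*(1-h))*((1-h)-0) + (-(p*h^(p-1)))*((1-h)^2-0^2)/2)
      + h^(p+1)/(p+1)) + (h^p + p*h^(p-1)*(1-h)) := by
    apply add_nonneg _ hC0
    apply mul_nonneg hb0.le
    apply add_nonneg _ (div_nonneg (Real.rpow_nonneg hh0.le _) (by linarith))
    nlinarith [mul_nonneg (mul_nonneg (by linarith : (0:ℝ) ≤ p) hB0) (sq_nonneg (1-h)),
      mul_nonneg hhp (by linarith : (0:ℝ) ≤ 1-h)]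
  have nn_psi : (0:ℝ) ≤ b * (h^(p+1)/(p+1)
      + (((h^p + p*h^(p-1)*(1-h)) - p*h^(p-1))*(1-h) + (p*h^(p-1))*(1^2-h^2)/2))
      + (h^p + p*h^(p-1)*(1-h)) := by
    apply add_nonneg _ hC0
    apply mul_nonneg hb0.le
    apply add_nonneg (div_nonneg (Real.rpow_nonneg hh0.le _) (by linarith))
    nlinarith [mul_nonneg (mul_nonneg (by linarith : (0:ℝ) ≤ p) hB0) (sq_nonneg (1-h)),
      mul_nonneg hhp (by linarith : (0:ℝ) ≤ 1-h)]
  have hmerge : ENNReal.ofReal (b ^ (-p) * (b - 1 + 2 / (p + 1)))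
      + ENNReal.ofReal ((h^p + p*h^(p-1)*(1-h)) * (b+1))
      ≤ (∫⁻ z, ENNReal.ofReal (|z.1 - z.2| ^ p) ∂P)
      + ENNReal.ofReal ((h^p + p*h^(p-1)*(1-h)) * (b+1)) := by
    rw [← ENNReal.ofReal_add hT0 (mul_nonneg hC0 (by linarith))]
    calc ENNReal.ofReal (b ^ (-p) * (b - 1 + 2 / (p + 1)) + (h^p + p*h^(p-1)*(1-h)) * (b+1))
        = ENNReal.ofReal ((b * (((h^p + p*h^(p-1)*(1-h))*((1-h)-0) + (-(p*h^(p-1)))*((1-h)^2-0^2)/2)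
            + h^(p+1)/(p+1)) + (h^p + p*h^(p-1)*(1-h)))
          + (b * (h^(p+1)/(p+1)
            + (((h^p + p*h^(p-1)*(1-h)) - p*h^(p-1))*(1-h) + (p*h^(p-1))*(1^2-h^2)/2))
            + (h^p + p*h^(p-1)*(1-h)))) := by rw [grand_real hp hb hh]
      _ = ENNReal.ofReal (b * (((h^p + p*h^(p-1)*(1-h))*((1-h)-0) + (-(p*h^(p-1)))*((1-h)^2-0^2)/2)
            + h^(p+1)/(p+1)) + (h^p + p*h^(p-1)*(1-h)))
          + ENNReal.ofReal (b * (h^(p+1)/(p+1)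
            + (((h^p + p*h^(p-1)*(1-h)) - p*h^(p-1))*(1-h) + (p*h^(p-1))*(1^2-h^2)/2))
            + (h^p + p*h^(p-1)*(1-h))) := by
          rw [ENNReal.ofReal_add nn_phi nn_psi]
      _ ≤ _ := hstep
  exact (ENNReal.add_le_add_iff_right ENNReal.ofReal_ne_top).mp hmerge

end lb


section final
variable {p b : ℝ}

lemma inf_eq (hp : 1 ≤ p) (hb : 1 ≤ b) :
    (⨅ (π : Measure (ℝ × ℝ))
       (_ : π.map Prod.fst = ENNReal.ofReal b • volume.restrict (Set.Icc (0:ℝ) 1) + Measure.dirac 0)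
       (_ : π.map Prod.snd = ENNReal.ofReal b • volume.restrict (Set.Icc (0:ℝ) 1) + Measure.dirac 1),
      ∫⁻ z, ENNReal.ofReal (|z.1 - z.2| ^ p) ∂π)
    = ENNReal.ofReal (b ^ (-p) * (b - 1 + 2 / (p + 1))) := by
  refine le_antisymm ?_ ?_
  · exact iInf_le_of_le (couplingPi b b⁻¹)
      (iInf_le_of_le (couplingPi_fst hb rfl)
        (iInf_le_of_le (couplingPi_snd hb rfl) (le_of_eq (couplingPi_cost hp hb rfl))))
  · exact le_iInf fun π => le_iInf fun h1 => le_iInf fun h2 => cost_lower hp hb rfl π h1 h2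

lemma Wp_pow (hp : 1 ≤ p) (hb : 1 ≤ b) :
    (Wp p (ENNReal.ofReal b • volume.restrict (Set.Icc (0 : ℝ) 1) + Measure.dirac 0)
         (ENNReal.ofReal b • volume.restrict (Set.Icc (0 : ℝ) 1) + Measure.dirac 1)) ^ p
      = ENNReal.ofReal (b ^ (-p) * (b - 1 + 2 / (p + 1))) := by
  unfold Wp
  rw [← ENNReal.rpow_mul, show 1/p*p = 1 from one_div_mul_cancel (by linarith), ENNReal.rpow_one,
    inf_eq hp hb]

lemma Wp_eq (hp : 1 ≤ p) (hb : 1 ≤ b) :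
    Wp p (ENNReal.ofReal b • volume.restrict (Set.Icc (0 : ℝ) 1) + Measure.dirac 0)
         (ENNReal.ofReal b • volume.restrict (Set.Icc (0 : ℝ) 1) + Measure.dirac 1)
      = ENNReal.ofReal (b ^ (-p) * (b - 1 + 2 / (p + 1))) ^ (1/p) := by
  unfold Wp
  rw [inf_eq hp hb]

lemma Wp_dirac_ge (hp : 1 ≤ p) : 1 ≤ Wp p (Measure.dirac 0) (Measure.dirac 1) := by
  unfold Wp
  rw [show (1:ℝ≥0∞) = 1 ^ (1/p) from (ENNReal.one_rpow _).symm]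
  apply ENNReal.rpow_le_rpow _ (by positivity : (0:ℝ) ≤ 1/p)
  refine le_iInf fun π => le_iInf fun h1 => le_iInf fun h2 => ?_
  have hPu : π Set.univ = 1 := by
    have h3 : π.map Prod.fst Set.univ = π Set.univ := by
      rw [Measure.map_apply measurable_fst MeasurableSet.univ, Set.preimage_univ]
    rw [← h3, h1, measure_univ]
  have ha : ∀ᵐ z : ℝ × ℝ ∂π, z.1 = 0 := by
    rw [ae_iff]
    have e : {z : ℝ × ℝ | ¬ z.1 = 0} = Prod.fst ⁻¹' ({(0:ℝ)}ᶜ) := rfl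
    rw [e, ← Measure.map_apply measurable_fst (measurableSet_singleton _).compl, h1,
      Measure.dirac_apply' _ (measurableSet_singleton _).compl]
    simp
  have hb2 : ∀ᵐ z : ℝ × ℝ ∂π, z.2 = 1 := by
    rw [ae_iff]
    have e : {z : ℝ × ℝ | ¬ z.2 = 1} = Prod.snd ⁻¹' ({(1:ℝ)}ᶜ) := rfl
    rw [e, ← Measure.map_apply measurable_snd (measurableSet_singleton _).compl, h2,
      Measure.dirac_apply' _ (measurableSet_singleton _).compl]
    simp
  have hcongr : ∫⁻ z, ENNReal.ofReal (|z.1 - z.2| ^ p) ∂π = ∫⁻ _z, 1 ∂π := by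
    apply lintegral_congr_ae
    filter_upwards [ha, hb2] with z e1 e2
    rw [e1, e2]
    norm_num
  rw [hcongr, lintegral_one, hPu]

lemma Wp_tendsto (hp1 : 1 < p) :
    Tendsto (fun b : ℝ =>
        Wp p (ENNReal.ofReal b • volume.restrict (Set.Icc (0 : ℝ) 1) + Measure.dirac 0)
             (ENNReal.ofReal b • volume.restrict (Set.Icc (0 : ℝ) 1) + Measure.dirac 1))
      atTop (nhds 0) := by
  have hp : 1 ≤ p := hp1.le
  have hreal : Tendsto (fun b : ℝ => b ^ (-p) * (b - 1 + 2 / (p + 1))) atTop (nhds 0) := by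
    apply squeeze_zero' (g := fun b : ℝ => 2 * b ^ (1-p)) (t₀ := atTop)
    · filter_upwards [eventually_ge_atTop (1:ℝ)] with b hb
      have hb0 : (0:ℝ) < b := by linarith
      exact mul_nonneg (Real.rpow_nonneg hb0.le _)
        (add_nonneg (by linarith) (le_of_lt (div_pos two_pos (by linarith))))
    · filter_upwards [eventually_ge_atTop (1:ℝ)] with b hb
      have hb0 : (0:ℝ) < b := by linarith
      have he : b ^ (1-p) = b ^ (-p) * b := by
        rw [show (1:ℝ)-p = -p + 1 from by ring, Real.rpow_add hb0, Real.rpow_one]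
      have hc : 2/(p+1) ≤ 1 := by
        rw [div_le_one (by linarith)]; linarith
      have hbp0 : (0:ℝ) ≤ b ^ (-p) := Real.rpow_nonneg hb0.le _
      rw [he]
      nlinarith
    · have h5 := (tendsto_rpow_neg_atTop (show (0:ℝ) < p - 1 by linarith)).const_mul (2:ℝ)
      simp only [mul_zero] at h5
      have e : (fun b : ℝ => 2 * b ^ (1-p)) = fun b : ℝ => 2 * b ^ (-(p-1)) := by
        funext b; rw [show (1:ℝ)-p = -(p-1) from by ring]
      rw [e]
      exact h5
  have henn : Tendsto (fun b : ℝ => ENNReal.ofReal (b ^ (-p) * (b - 1 + 2 / (p + 1))) ^ (1/p))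
      atTop (nhds 0) := by
    have h2 := (ENNReal.tendsto_ofReal hreal)
    have h3 := (ENNReal.continuous_rpow_const (y := 1/p)).tendsto (ENNReal.ofReal 0)
    have h4 := h3.comp h2
    simp only [ENNReal.ofReal_zero] at h4
    rwa [ENNReal.zero_rpow_of_pos (by positivity)] at h4
  apply henn.congr'
  filter_upwards [eventually_ge_atTop (1:ℝ)] with b hb
  exact (Wp_eq hp hb).symm

end final


/-- On `ℝ`, with `μ = δ₀`, `ν = δ₁` and `α = b·Leb|_{[0,1]}` for
`b ≥ 1`: `W_p(α + μ, α + ν)^p = b^{-p} (b - 1 + 2/(p+1))`. In particular, for every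
`p > 1`, `W_p(α + μ, α + ν) → 0` as `b → ∞`, so the identity
`W_p(α + μ, α + ν) = W_p(μ, ν)` fails for every `p > 1`. -/
theorem Wp_add_common_counterexample (p : ℝ) (hp : 1 ≤ p) :
    (∀ b : ℝ, 1 ≤ b →
      (Wp p (ENNReal.ofReal b • volume.restrict (Set.Icc (0 : ℝ) 1) + Measure.dirac 0)
           (ENNReal.ofReal b • volume.restrict (Set.Icc (0 : ℝ) 1) + Measure.dirac 1)) ^ p
        = ENNReal.ofReal (b ^ (-p) * (b - 1 + 2 / (p + 1)))) ∧
    (1 < p →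
      Tendsto
        (fun b : ℝ =>
          Wp p (ENNReal.ofReal b • volume.restrict (Set.Icc (0 : ℝ) 1) + Measure.dirac 0)
               (ENNReal.ofReal b • volume.restrict (Set.Icc (0 : ℝ) 1) + Measure.dirac 1))
        atTop (nhds 0) ∧
      ∃ b : ℝ, 1 ≤ b ∧
        Wp p (ENNReal.ofReal b • volume.restrict (Set.Icc (0 : ℝ) 1) + Measure.dirac 0)
             (ENNReal.ofReal b • volume.restrict (Set.Icc (0 : ℝ) 1) + Measure.dirac 1)
          ≠ Wp p (Measure.dirac 0) (Measure.dirac 1)) := by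
  refine ⟨fun b hb => Wp_pow hp hb, fun hp1 => ⟨Wp_tendsto hp1, ?_⟩⟩
  obtain ⟨b, hlt, hb1⟩ :=
    (((Wp_tendsto hp1).eventually_lt_const (by norm_num : (0:ℝ≥0∞) < 1)).and
      (eventually_ge_atTop (1:ℝ))).exists
  exact ⟨b, hb1, ne_of_lt (lt_of_lt_of_le hlt (Wp_dirac_ge hp))⟩
end helpers
end
end
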